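/- arXiv:1712.04613 — 4 statements merged into one kernel-verified Lean document; each statement's English description precedes it below -/
import Mathlib

section
/- Let N ∈ ℕ, W ∈ (0, 1/2), and K ∈ {1,…,N}. Let S_K denote the N×K matrix whose columns are the first K DPSS vectors. Then ∫_{−W}^{W} ‖e_f − S_K S_K* e_f‖₂² df = Σ_{ℓ=K}^{N−1} λ^{(ℓ)}, where λ^{(ℓ)} are the eigenvalues of B_{N,W} in decreasing order. -/
open Matrix MeasureTheory
open scoped Real

noncomputable section

/-- The prolate matrix `B_{N,W}`. -/
def prolateR (N : ℕ) (W : ℝ) : Matrix (Fin N) (Fin N) ℝ :=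
  Matrix.of fun m n : Fin N =>
    if m = n then 2 * W
    else Real.sin (2 * Real.pi * W * (((m : ℕ) : ℝ) - ((n : ℕ) : ℝ))) /
      (Real.pi * (((m : ℕ) : ℝ) - ((n : ℕ) : ℝ)))

/-- sampled complex exponential `e_f`. -/
def eVec (N : ℕ) (f : ℝ) : Fin N → ℂ :=
  fun n => Complex.exp (2 * (Real.pi : ℂ) * (f : ℂ) * ((n : ℕ) : ℂ) * Complex.I)

/-- squared residual `‖e_f − P e_f‖₂²`. -/
def residP {N : ℕ} (P : Matrix (Fin N) (Fin N) ℂ) (f : ℝ) : ℝ :=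
  ∑ n, ‖(eVec N f - P.mulVec (eVec N f)) n‖ ^ 2

lemma entry_int (N : ℕ) (W : ℝ) (m n : Fin N) :
    ∫ f in (-W)..W, (starRingEnd ℂ) (eVec N f m) * eVec N f n
      = ((prolateR N W m n : ℝ) : ℂ) := by
  have hints : ∀ f : ℝ, (starRingEnd ℂ) (eVec N f m) * eVec N f n
      = Complex.exp ((2 * (Real.pi : ℂ) * (((n : ℕ) : ℂ) - ((m : ℕ) : ℂ)) * Complex.I) * (f : ℂ)) := by
    intro f
    simp only [eVec, ← Complex.exp_conj, ← Complex.exp_add]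
    congr 1
    have : (starRingEnd ℂ) (2 * (Real.pi : ℂ) * (f : ℂ) * ((m : ℕ) : ℂ) * Complex.I)
        = -(2 * (Real.pi : ℂ) * (f : ℂ) * ((m : ℕ) : ℂ) * Complex.I) := by
      simp only [_root_.map_mul, Complex.conj_I, Complex.conj_ofReal, map_ofNat, map_natCast]
      ring
    rw [this]; ring
  simp only [hints]
  by_cases hmn : m = n
  · subst hmn
    simp only [sub_self, mul_zero, zero_mul, Complex.exp_zero, prolateR, Matrix.of_apply, if_pos rfl]
    rw [intervalIntegral.integral_const, Complex.real_smul, mul_one]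
    push_cast; ring
  · have hc : (2 * (Real.pi : ℂ) * (((n : ℕ) : ℂ) - ((m : ℕ) : ℂ)) * Complex.I) ≠ 0 := by
      have h1 : (((n : ℕ) : ℂ) - ((m : ℕ) : ℂ)) ≠ 0 := by
        intro h
        apply hmn
        have : ((n : ℕ) : ℂ) = ((m : ℕ) : ℂ) := by linear_combination h
        exact Fin.ext (by exact_mod_cast this.symm)
      have hπ : ((Real.pi : ℝ) : ℂ) ≠ 0 := by exact_mod_cast Real.pi_ne_zero
      exact mul_ne_zero (mul_ne_zero (mul_ne_zero two_ne_zero hπ) h1) Complex.I_ne_zero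
    rw [integral_exp_mul_complex hc]
    set a : ℝ := ((n : ℕ) : ℝ) - ((m : ℕ) : ℝ) with ha
    have haC : (((n : ℕ) : ℂ) - ((m : ℕ) : ℂ)) = (a : ℂ) := by
      rw [ha, Complex.ofReal_sub]; norm_cast
    have ha0 : a ≠ 0 := by
      intro h
      apply hmn
      have := sub_eq_zero.mp h
      exact Fin.ext (by exact_mod_cast this.symm)
    rw [haC]
    have e1 : 2 * (Real.pi:ℂ) * (a:ℂ) * Complex.I * (W:ℂ) = ((2*Real.pi*a*W : ℝ):ℂ) * Complex.I := by
      push_cast; ring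
    have e2 : 2 * (Real.pi:ℂ) * (a:ℂ) * Complex.I * ((-W:ℝ):ℂ) = ((-(2*Real.pi*a*W) : ℝ):ℂ) * Complex.I := by
      push_cast; ring
    rw [e1, e2, Complex.exp_mul_I, Complex.exp_mul_I]
    rw [prolateR]
    simp only [Matrix.of_apply, if_neg hmn]
    rw [← Complex.ofReal_cos, ← Complex.ofReal_sin, ← Complex.ofReal_cos, ← Complex.ofReal_sin]
    rw [Real.cos_neg, Real.sin_neg]
    have hsin : Real.sin (2*Real.pi*W*(((m : ℕ) : ℝ) - ((n : ℕ) : ℝ))) = - Real.sin (2*Real.pi*a*W) := by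
      rw [← Real.sin_neg, ha]; ring_nf
    rw [hsin]
    have hden : Real.pi * (((m : ℕ) : ℝ) - ((n : ℕ) : ℝ)) = -(Real.pi * a) := by rw [ha]; ring
    rw [hden]
    have hc' : 2 * (Real.pi:ℂ) * (a:ℂ) * Complex.I ≠ 0 := by rw [← haC]; exact hc
    rw [neg_div_neg_eq, Complex.ofReal_div, div_eq_div_iff hc'
      (by exact_mod_cast mul_ne_zero Real.pi_ne_zero ha0 : ((Real.pi * a : ℝ):ℂ) ≠ 0)]
    push_cast; ring

lemma resid_expand {N : ℕ} (P : Matrix (Fin N) (Fin N) ℂ) (f : ℝ) :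
    residP P f
      = (∑ i, ∑ j, (((1 - P)ᴴ * (1 - P) : Matrix (Fin N) (Fin N) ℂ)) i j *
          ((starRingEnd ℂ) (eVec N f i) * eVec N f j)).re := by
  have hw : (eVec N f - P.mulVec (eVec N f)) = (1 - P).mulVec (eVec N f) := by
    rw [Matrix.sub_mulVec, Matrix.one_mulVec]
  rw [residP, hw]
  calc ∑ k, ‖(1 - P).mulVec (eVec N f) k‖ ^ 2
      = (∑ k, (starRingEnd ℂ) ((1 - P).mulVec (eVec N f) k) *
          ((1 - P).mulVec (eVec N f) k)).re := by
        rw [Complex.re_sum]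
        refine Finset.sum_congr rfl fun k _ => ?_
        rw [mul_comm, Complex.mul_conj, Complex.ofReal_re, ← Complex.sq_norm]
    _ = _ := by
        congr 1
        calc ∑ k, (starRingEnd ℂ) ((1 - P).mulVec (eVec N f) k) *
              ((1 - P).mulVec (eVec N f) k)
            = ∑ k, ∑ i, ∑ j, ((starRingEnd ℂ) ((1 - P) k i) * (starRingEnd ℂ) (eVec N f i)) *
                ((1 - P) k j * eVec N f j) := by
              refine Finset.sum_congr rfl fun k _ => ?_
              have hk : (1 - P).mulVec (eVec N f) k = ∑ j, (1 - P) k j * eVec N f j := by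
                simp [Matrix.mulVec, dotProduct]
              rw [hk, map_sum]
              simp_rw [_root_.map_mul]
              rw [Finset.sum_mul_sum]
          _ = ∑ i, ∑ j, (∑ k, (starRingEnd ℂ) ((1 - P) k i) * (1 - P) k j) *
                ((starRingEnd ℂ) (eVec N f i) * eVec N f j) := by
              rw [Finset.sum_comm]
              refine Finset.sum_congr rfl fun i _ => ?_
              rw [Finset.sum_comm]
              refine Finset.sum_congr rfl fun j _ => ?_
              rw [Finset.sum_mul]
              exact Finset.sum_congr rfl fun k _ => by ring
          _ = _ := by
              refine Finset.sum_congr rfl fun i _ => Finset.sum_congr rfl fun j _ => ?_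
              have hentry : (((1 - P)ᴴ * (1 - P) : Matrix (Fin N) (Fin N) ℂ)) i j
                  = ∑ k, (starRingEnd ℂ) ((1 - P) k i) * (1 - P) k j := by
                rw [Matrix.mul_apply]
                exact Finset.sum_congr rfl fun k _ => by rw [Matrix.conjTranspose_apply]; rfl
              rw [hentry]

lemma prolate_symm (N : ℕ) (W : ℝ) (i j : Fin N) :
    prolateR N W i j = prolateR N W j i := by
  rcases eq_or_ne i j with h | h
  · rw [h]
  · rw [prolateR]
    simp only [Matrix.of_apply, if_neg h, if_neg (Ne.symm h)]
    rw [show (2*Real.pi*W*(((i:ℕ):ℝ) - ((j:ℕ):ℝ))) = -(2*Real.pi*W*(((j:ℕ):ℝ) - ((i:ℕ):ℝ))) by ring,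
      Real.sin_neg,
      show (Real.pi*(((i:ℕ):ℝ) - ((j:ℕ):ℝ))) = -(Real.pi*(((j:ℕ):ℝ) - ((i:ℕ):ℝ))) by ring,
      neg_div_neg_eq]


/-- `∫_{−W}^{W} ‖e_f − S_K S_K* e_f‖₂² df = Σ_{ℓ=K}^{N−1} λ^{(ℓ)}`. -/
theorem stmt4 (N K : ℕ) (W : ℝ) (hW : W ∈ Set.Ioo (0 : ℝ) (1 / 2))
    (hK1 : 1 ≤ K) (hKN : K ≤ N)
    (lam : Fin N → ℝ) (S : Matrix (Fin N) (Fin N) ℝ)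
    (hOrth : Sᵀ * S = 1)
    (hEig : prolateR N W * S = S * Matrix.diagonal lam)
    (hAnti : StrictAnti lam)
    (hPos : ∀ ℓ, 0 < lam ℓ) (hLtOne : ∀ ℓ, lam ℓ < 1) :
    (∫ f in (-W)..W,
        residP ((S.map (fun x => (x : ℂ))).submatrix id (Fin.castLE hKN) *
          ((S.map (fun x => (x : ℂ))).submatrix id (Fin.castLE hKN))ᴴ) f)
      = ∑ ℓ ∈ Finset.univ.filter (fun ℓ : Fin N => K ≤ (ℓ : ℕ)), lam ℓ := by
  set c := Fin.castLE hKN with hc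
  set Sc : Matrix (Fin N) (Fin N) ℂ := S.map (fun x => (x : ℂ)) with hSc
  set M : Matrix (Fin N) (Fin K) ℂ := Sc.submatrix id c with hM
  set P : Matrix (Fin N) (Fin N) ℂ := M * Mᴴ with hP
  -- M has orthonormal columns
  have hMM : Mᴴ * M = (1 : Matrix (Fin K) (Fin K) ℂ) := by
    ext i j
    have hreal : (Sᵀ * S) (c i) (c j) = (1 : Matrix (Fin N) (Fin N) ℝ) (c i) (c j) := by
      rw [hOrth]
    simp only [Matrix.mul_apply, Matrix.transpose_apply] at hreal
    simp only [Matrix.mul_apply, Matrix.conjTranspose_apply, Matrix.submatrix_apply, hM, hSc,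
      Matrix.map_apply, id_eq]
    have hstar : ∀ x : ℝ, (star ((x : ℝ) : ℂ) : ℂ) = ((x : ℝ) : ℂ) := fun x =>
      Complex.conj_ofReal x
    simp only [hstar]
    calc ∑ k, ((S k (c i) : ℂ)) * (S k (c j) : ℂ)
        = ((∑ k, S k (c i) * S k (c j) : ℝ) : ℂ) := by push_cast; ring
      _ = (((1 : Matrix (Fin N) (Fin N) ℝ) (c i) (c j) : ℝ) : ℂ) := by rw [hreal]
      _ = (1 : Matrix (Fin K) (Fin K) ℂ) i j := by
          simp [Matrix.one_apply, hc, Fin.castLE_inj]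
          split <;> simp_all
  have hPH : Pᴴ = P := by
    rw [hP, Matrix.conjTranspose_mul, Matrix.conjTranspose_conjTranspose]
  have hP2 : P * P = P := by
    rw [hP, Matrix.mul_assoc, ← Matrix.mul_assoc Mᴴ, hMM, Matrix.one_mul]
  have hQ : (1 - P)ᴴ * (1 - P) = 1 - P := by
    have h1 : (1 - P)ᴴ = 1 - P := by
      rw [Matrix.conjTranspose_sub, Matrix.conjTranspose_one, hPH]
    rw [h1, Matrix.sub_mul, Matrix.one_mul, Matrix.mul_sub, Matrix.mul_one, hP2, sub_self,
      sub_zero]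
  -- continuity
  have hconte : ∀ n : Fin N, Continuous fun f : ℝ => eVec N f n := by
    intro n
    exact Complex.continuous_exp.comp
      (((continuous_const.mul Complex.continuous_ofReal).mul continuous_const).mul
        continuous_const)
  have hcont : ∀ i j : Fin N,
      Continuous fun f : ℝ => (starRingEnd ℂ) (eVec N f i) * eVec N f j := by
    intro i j
    exact ((Complex.continuous_conj.comp (hconte i))).mul (hconte j)
  -- the integrand as a complex function
  set g : ℝ → ℂ := fun f => ∑ i, ∑ j, (1 - P) i j *
    ((starRingEnd ℂ) (eVec N f i) * eVec N f j) with hg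
  have hgcont : Continuous g := by
    apply continuous_finset_sum
    intro i _
    exact continuous_finset_sum _ fun j _ => continuous_const.mul (hcont i j)
  have hresid : ∀ f : ℝ, residP P f = (g f).re := by
    intro f
    rw [resid_expand, hQ]
  -- compute complex integral
  have hgint : (∫ f in (-W)..W, g f)
      = ∑ i, ∑ j, (1 - P) i j * ((prolateR N W i j : ℝ) : ℂ) := by
    rw [hg]
    rw [intervalIntegral.integral_finset_sum (fun i _ => ?_)]
    · refine Finset.sum_congr rfl fun i _ => ?_
      rw [intervalIntegral.integral_finset_sum (fun j _ => ?_)]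
      · refine Finset.sum_congr rfl fun j _ => ?_
        rw [intervalIntegral.integral_const_mul, entry_int]
      · exact (continuous_const.mul (hcont i j)).intervalIntegrable _ _
    · exact (continuous_finset_sum _ fun j _ =>
        continuous_const.mul (hcont i j)).intervalIntegrable _ _
  have hint : (∫ f in (-W)..W, residP P f)
      = (∑ i, ∑ j, (1 - P) i j * ((prolateR N W i j : ℝ) : ℂ)).re := by
    simp only [hresid]
    have := Complex.reCLM.intervalIntegral_comp_comm
      (μ := volume) (a := -W) (b := W) (f := g) (hgcont.intervalIntegrable _ _)
    simpa [hgint] using this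
  rw [hint]
  -- matrix algebra
  set Bc : Matrix (Fin N) (Fin N) ℂ := (prolateR N W).map (fun x => (x : ℂ)) with hBc
  have hsum_trace : (∑ i, ∑ j, (1 - P) i j * ((prolateR N W i j : ℝ) : ℂ))
      = ((1 - P) * Bc).trace := by
    have h0 : ((1 - P) * Bc).trace = ∑ i, ∑ j, (1 - P) i j * Bc j i := by
      simp [Matrix.trace, Matrix.diag, Matrix.mul_apply]
    rw [h0]
    refine Finset.sum_congr rfl fun i _ => Finset.sum_congr rfl fun j _ => ?_
    rw [hBc]
    simp only [Matrix.map_apply]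
    rw [prolate_symm]
  rw [hsum_trace]
  -- trace identities
  have hSST : S * Sᵀ = 1 := mul_eq_one_comm.mp hOrth
  have htraceB : (prolateR N W).trace = ∑ ℓ, lam ℓ := by
    have : prolateR N W = S * Matrix.diagonal lam * Sᵀ := by
      calc prolateR N W = prolateR N W * (S * Sᵀ) := by rw [hSST, Matrix.mul_one]
        _ = (prolateR N W * S) * Sᵀ := by rw [Matrix.mul_assoc]
        _ = S * Matrix.diagonal lam * Sᵀ := by rw [hEig]
    rw [this, Matrix.trace_mul_cycle, hOrth, Matrix.one_mul, Matrix.trace_diagonal]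
  have hBcS : Sᵀ * prolateR N W * S = Matrix.diagonal lam := by
    rw [Matrix.mul_assoc, hEig, ← Matrix.mul_assoc, hOrth, Matrix.one_mul]
  -- complexified versions
  have hMBM : Mᴴ * Bc * M
      = ((Matrix.diagonal lam).map (fun x : ℝ => (x : ℂ))).submatrix c c := by
    ext i j
    have hr : (Sᵀ * prolateR N W * S) (c i) (c j) = Matrix.diagonal lam (c i) (c j) := by
      rw [hBcS]
    simp only [Matrix.mul_apply, Matrix.transpose_apply] at hr
    have hstar : ∀ x : ℝ, (star ((x : ℝ) : ℂ) : ℂ) = ((x : ℝ) : ℂ) := fun x =>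
      Complex.conj_ofReal x
    simp only [Matrix.mul_apply, Matrix.conjTranspose_apply, Matrix.submatrix_apply,
      Matrix.map_apply, id_eq, hM, hSc, hBc, hstar]
    rw [← hr]
    push_cast
    rfl
  have htracePB : (P * Bc).trace = ∑ i : Fin K, ((lam (c i) : ℝ) : ℂ) := by
    rw [hP, Matrix.mul_assoc, Matrix.trace_mul_comm, hMBM]
    rw [Matrix.trace]
    refine Finset.sum_congr rfl fun i _ => ?_
    simp [Matrix.diag, Matrix.submatrix_apply, Matrix.map_apply, Matrix.diagonal_apply_eq]
  have htraceBc : Bc.trace = ((∑ ℓ, lam ℓ : ℝ) : ℂ) := by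
    rw [← htraceB, hBc, Matrix.trace, Matrix.trace]
    push_cast
    rfl
  rw [Matrix.sub_mul, Matrix.one_mul, Matrix.trace_sub, htracePB, htraceBc]
  -- finish: real part
  have hfin : ∑ ℓ, lam ℓ = (∑ ℓ ∈ Finset.univ.filter (fun ℓ : Fin N => K ≤ (ℓ : ℕ)), lam ℓ)
      + ∑ i : Fin K, lam (c i) := by
    rw [← Finset.sum_filter_add_sum_filter_not Finset.univ (fun ℓ : Fin N => K ≤ (ℓ : ℕ))]
    congr 1
    have hmapset : Finset.univ.filter (fun ℓ : Fin N => ¬ K ≤ (ℓ : ℕ))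
        = (Finset.univ : Finset (Fin K)).map (Fin.castLEEmb hKN) := by
      ext ℓ
      simp only [Finset.mem_filter, Finset.mem_univ, true_and, Finset.mem_map,
        Fin.castLEEmb_apply, not_le]
      constructor
      · intro h
        exact ⟨⟨(ℓ : ℕ), h⟩, by ext; simp⟩
      · rintro ⟨i, rfl⟩
        simpa using i.isLt
    rw [hmapset, Finset.sum_map]
    rfl
  have : ((∑ ℓ, lam ℓ : ℝ) : ℂ) - ∑ i : Fin K, ((lam (c i) : ℝ) : ℂ)
      = ((∑ ℓ ∈ Finset.univ.filter (fun ℓ : Fin N => K ≤ (ℓ : ℕ)), lam ℓ : ℝ) : ℂ) := by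
    rw [hfin]; push_cast; ring
  rw [this, Complex.ofReal_re]
end
end

section
/- Let N ∈ ℕ, W ∈ (0, 1/2), and K ∈ {1,…,N}. For every Q ∈ ℂ^{N×K} with orthonormal columns (Q*Q = I), ∫_{−W}^{W} ‖e_f − QQ*e_f‖₂² df ≥ Σ_{ℓ=K}^{N−1} λ^{(ℓ)}, i.e., the matrix S_K of the first K DPSS vectors minimizes the mean-squared representation error ∫_{−W}^{W} ‖e_f − QQ*e_f‖₂² df over all N×K matrices Q with orthonormal columns. -/
open Matrix MeasureTheory
open scoped Real

noncomputable section

/- ## auxiliary lemmas -/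

lemma dotA {N : ℕ} (v : Fin N → ℂ) : star v ⬝ᵥ v = ((∑ n, ‖v n‖^2 : ℝ) : ℂ) := by
  simp only [dotProduct, Complex.ofReal_sum, Pi.star_apply]
  congr 1; ext n
  rw [show (star (v n)) = (starRingEnd ℂ) (v n) from rfl,
    ← Complex.normSq_eq_conj_mul_self, Complex.normSq_eq_norm_sq]

lemma conj_mul_self' (z : ℂ) : (starRingEnd ℂ) z * z = ((‖z‖^2 : ℝ) : ℂ) := by
  rw [← Complex.normSq_eq_conj_mul_self, Complex.normSq_eq_norm_sq]

lemma mul_conj_self' (z : ℂ) : z * (starRingEnd ℂ) z = ((‖z‖^2 : ℝ) : ℂ) := by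
  rw [mul_comm]; exact conj_mul_self' z

lemma projB {N K : ℕ} (Q : Matrix (Fin N) (Fin K) ℂ) (hQ : Qᴴ * Q = 1) (x : Fin N → ℂ) :
    ∑ n, ‖(x - (Q * Qᴴ).mulVec x) n‖^2
      = (∑ n, ‖x n‖^2) - ∑ k, ‖(Qᴴ.mulVec x) k‖^2 := by
  set u : Fin K → ℂ := Qᴴ.mulVec x with hu
  have hQu : (Q * Qᴴ).mulVec x = Q.mulVec u := by rw [← Matrix.mulVec_mulVec]
  have hsu : star u = star x ᵥ* Q := by
    rw [hu, Matrix.star_mulVec, Matrix.conjTranspose_conjTranspose]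
  have h1 : star (x - Q.mulVec u) ⬝ᵥ (x - Q.mulVec u)
      = star x ⬝ᵥ x - star u ⬝ᵥ u := by
    have e1 : star x ⬝ᵥ Q.mulVec u = star u ⬝ᵥ u := by
      rw [Matrix.dotProduct_mulVec, ← hsu]
    have e2 : star (Q.mulVec u) ⬝ᵥ x = star u ⬝ᵥ u := by
      rw [Matrix.star_mulVec, ← Matrix.dotProduct_mulVec, hu]
    have e3 : star (Q.mulVec u) ⬝ᵥ Q.mulVec u = star u ⬝ᵥ u := by
      rw [Matrix.star_mulVec, Matrix.dotProduct_mulVec, Matrix.vecMul_vecMul, hQ,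
        Matrix.vecMul_one]
    rw [star_sub, sub_dotProduct, dotProduct_sub, dotProduct_sub,
      e1, e2, e3]
    ring
  rw [hQu]
  rw [dotA, dotA, dotA] at h1
  exact_mod_cast h1

lemma expdiff (z : ℂ) : Complex.exp (z * Complex.I) - Complex.exp (-(z * Complex.I))
    = 2 * Complex.sin z * Complex.I := by
  simp only [Complex.sin, neg_mul]
  field_simp
  linear_combination (Complex.exp (z*Complex.I) - Complex.exp (-(z*Complex.I))) * Complex.I_sq

lemma intC (W d : ℝ) :
    ∫ f in (-W)..W, Complex.exp (2 * (π:ℂ) * (f:ℂ) * (d:ℂ) * Complex.I)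
      = ((if d = 0 then 2 * W else Real.sin (2 * π * W * d) / (π * d) : ℝ) : ℂ) := by
  by_cases hd : d = 0
  · simp [hd, two_mul]
  · have hc : (2 * (π:ℂ) * (d:ℂ) * Complex.I) ≠ 0 := by
      simp [Real.pi_ne_zero, hd, Complex.I_ne_zero, Complex.ofReal_eq_zero]
    have h1 : ∀ f : ℝ, 2 * (π:ℂ) * (f:ℂ) * (d:ℂ) * Complex.I
        = (2 * (π:ℂ) * (d:ℂ) * Complex.I) * (f:ℂ) := by intro f; ring
    simp only [h1]
    rw [integral_exp_mul_complex hc]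
    simp only [hd, if_false]
    set z : ℂ := ((2 * π * W * d : ℝ):ℂ) with hz
    have e1 : (2 * (π:ℂ) * (d:ℂ) * Complex.I) * (W:ℂ) = z * Complex.I := by
      rw [hz]; push_cast; ring
    have e2 : (2 * (π:ℂ) * (d:ℂ) * Complex.I) * ((-W:ℝ):ℂ) = -(z * Complex.I) := by
      rw [hz]; push_cast; ring
    rw [e1, e2, expdiff]
    rw [div_eq_iff hc, hz, ← Complex.ofReal_sin]
    have hpd : ((π:ℂ) * (d:ℂ)) ≠ 0 := by
      simp [Real.pi_ne_zero, hd, Complex.ofReal_eq_zero]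
    rw [Complex.ofReal_div]
    push_cast
    field_simp
    ring
    rw [mul_comm (d:ℂ) (Complex.sin _), mul_inv_cancel_right₀ (show (d:ℂ) ≠ 0 by exact_mod_cast hd)]

lemma conjExpMul (f x y : ℝ) :
    (starRingEnd ℂ) (Complex.exp (2 * (π:ℂ) * (f:ℂ) * (x:ℂ) * Complex.I)) *
      Complex.exp (2 * (π:ℂ) * (f:ℂ) * (y:ℂ) * Complex.I)
    = Complex.exp (2 * (π:ℂ) * (f:ℂ) * ((y - x : ℝ):ℂ) * Complex.I) := by
  rw [← Complex.exp_conj, ← Complex.exp_add]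
  congr 1
  simp only [_root_.map_mul, Complex.conj_I, Complex.conj_ofReal, _root_.map_ofNat]
  push_cast
  ring

/-- every `Q` with orthonormal columns has MSE at least `Σ_{ℓ=K}^{N−1} λ^{(ℓ)}`,
i.e., `S_K` is MSE-optimal. -/
theorem stmt5 (N K : ℕ) (W : ℝ) (hW : W ∈ Set.Ioo (0 : ℝ) (1 / 2))
    (hK1 : 1 ≤ K) (hKN : K ≤ N)
    (lam : Fin N → ℝ) (S : Matrix (Fin N) (Fin N) ℝ)
    (hOrth : Sᵀ * S = 1)
    (hEig : prolateR N W * S = S * Matrix.diagonal lam)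
    (hAnti : StrictAnti lam)
    (hPos : ∀ ℓ, 0 < lam ℓ) (hLtOne : ∀ ℓ, lam ℓ < 1)
    (Q : Matrix (Fin N) (Fin K) ℂ) (hQ : Qᴴ * Q = 1) :
    (∑ ℓ ∈ Finset.univ.filter (fun ℓ : Fin N => K ≤ (ℓ : ℕ)), lam ℓ)
      ≤ ∫ f in (-W)..W, residP (Q * Qᴴ) f := by
  classical
  set Sc : Matrix (Fin N) (Fin N) ℂ := S.map (Complex.ofRealHom) with hSc
  set M : Matrix (Fin K) (Fin N) ℂ := Qᴴ * Sc with hM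
  set cc : Fin N → ℝ := fun ℓ => ∑ k, ‖M k ℓ‖^2 with hcc
  have hSS : S * Sᵀ = 1 := mul_eq_one_comm.mp hOrth
  have hScH : Scᴴ = Sᵀ.map (Complex.ofRealHom) := by
    ext i j
    simp [hSc, Matrix.conjTranspose_apply, Matrix.map_apply, Complex.conj_ofReal]
  have hScSc : Sc * Scᴴ = 1 := by
    rw [hScH, hSc, ← Matrix.map_mul, hSS, Matrix.map_one] <;> simp
  have hMM : M * Mᴴ = 1 := by
    rw [hM, Matrix.conjTranspose_mul, Matrix.conjTranspose_conjTranspose,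
      Matrix.mul_assoc, ← Matrix.mul_assoc Sc, hScSc, Matrix.one_mul, hQ]
  -- sum of cc = K
  have hsumcc : (∑ ℓ, cc ℓ) = (K : ℝ) := by
    have h1 : ((∑ ℓ, cc ℓ : ℝ) : ℂ) = ∑ k, (M * Mᴴ) k k := by
      simp only [hcc]
      push_cast
      rw [Finset.sum_comm]
      refine Finset.sum_congr rfl fun k _ => ?_
      rw [Matrix.mul_apply]
      refine Finset.sum_congr rfl fun ℓ _ => ?_
      rw [Matrix.conjTranspose_apply,
        show star (M k ℓ) = (starRingEnd ℂ) (M k ℓ) from rfl, mul_conj_self']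
      norm_cast
    rw [hMM] at h1
    simp only [Matrix.one_apply_eq, Finset.sum_const, Finset.card_univ,
      Fintype.card_fin, nsmul_eq_mul, mul_one] at h1
    exact_mod_cast h1
  -- entries of M as mulVec of columns of Sc
  have hMcol : ∀ (ℓ : Fin N) (k : Fin K),
      M k ℓ = (Qᴴ.mulVec (fun n => ((S n ℓ : ℝ) : ℂ))) k := by
    intro ℓ k
    simp only [hM, Matrix.mul_apply, Matrix.mulVec, dotProduct, hSc,
      Matrix.map_apply, Complex.ofRealHom_eq_coe]
  -- cc ℓ ≤ 1 and cc ℓ ≥ 0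
  have hcc0 : ∀ ℓ, 0 ≤ cc ℓ := by
    intro ℓ
    simp only [hcc]
    exact Finset.sum_nonneg fun k _ => by positivity
  have hcol1 : ∀ ℓ : Fin N, (∑ n, ‖((S n ℓ : ℝ) : ℂ)‖^2) = 1 := by
    intro ℓ
    have h := congrFun (congrFun hOrth ℓ) ℓ
    simp only [Matrix.mul_apply, Matrix.transpose_apply, Matrix.one_apply_eq] at h
    rw [← h]
    refine Finset.sum_congr rfl fun n _ => ?_
    rw [Complex.norm_real, Real.norm_eq_abs, sq_abs, sq]
  have hccle : ∀ ℓ, cc ℓ ≤ 1 := by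
    intro ℓ
    have hp := projB Q hQ (fun n => ((S n ℓ : ℝ) : ℂ))
    have h0 : 0 ≤ ∑ n, ‖((fun n => ((S n ℓ : ℝ) : ℂ))
        - (Q * Qᴴ).mulVec (fun n => ((S n ℓ : ℝ) : ℂ))) n‖^2 :=
      Finset.sum_nonneg fun n _ => by positivity
    rw [hp, hcol1 ℓ] at h0
    have : cc ℓ = ∑ k, ‖(Qᴴ.mulVec (fun n => ((S n ℓ : ℝ) : ℂ))) k‖^2 := by
      simp only [hcc]
      exact Finset.sum_congr rfl fun k _ => by rw [hMcol ℓ k]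
    rw [this]
    linarith
  -- B = S Λ Sᵀ
  have hBmat : prolateR N W = S * Matrix.diagonal lam * Sᵀ := by
    calc prolateR N W = prolateR N W * (S * Sᵀ) := by rw [hSS, Matrix.mul_one]
      _ = prolateR N W * S * Sᵀ := by rw [Matrix.mul_assoc]
      _ = S * Matrix.diagonal lam * Sᵀ := by rw [hEig]
  have hB : ∀ n m : Fin N, prolateR N W n m = ∑ ℓ, S n ℓ * lam ℓ * S m ℓ := by
    intro n m
    rw [hBmat]
    simp only [Matrix.mul_apply, Matrix.transpose_apply, Matrix.diagonal_apply, mul_ite,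
      mul_zero, Finset.sum_ite_eq', Finset.mem_univ, if_true]
  -- key algebraic identity
  have hMentry : ∀ (k : Fin K) (ℓ : Fin N),
      M k ℓ = ∑ n, (starRingEnd ℂ) (Q n k) * ((S n ℓ : ℝ) : ℂ) := by
    intro k ℓ
    simp only [hM, Matrix.mul_apply, Matrix.conjTranspose_apply, hSc,
      Matrix.map_apply, Complex.ofRealHom_eq_coe, starRingEnd_apply]
  have hMconj : ∀ (k : Fin K) (ℓ : Fin N),
      (starRingEnd ℂ) (M k ℓ) = ∑ m, Q m k * ((S m ℓ : ℝ) : ℂ) := by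
    intro k ℓ
    rw [hMentry, map_sum]
    refine Finset.sum_congr rfl fun m _ => ?_
    rw [_root_.map_mul, Complex.conj_conj, Complex.conj_ofReal]
  have hKey : (∑ k, ∑ m, ∑ n, (Q m k * (starRingEnd ℂ) (Q n k)) * ((prolateR N W n m : ℝ) : ℂ))
      = ((∑ ℓ, lam ℓ * cc ℓ : ℝ) : ℂ) := by
    have hL : (∑ k, ∑ m, ∑ n, (Q m k * (starRingEnd ℂ) (Q n k)) * ((prolateR N W n m : ℝ) : ℂ))
        = ∑ ℓ, ∑ k : Fin K, ∑ m, ∑ n, (Q m k * (starRingEnd ℂ) (Q n k)) *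
          (((S n ℓ : ℝ) : ℂ) * ((lam ℓ : ℝ) : ℂ) * ((S m ℓ : ℝ) : ℂ)) := by
      calc (∑ k, ∑ m, ∑ n, (Q m k * (starRingEnd ℂ) (Q n k)) * ((prolateR N W n m : ℝ) : ℂ))
          = ∑ k : Fin K, ∑ m, ∑ n, ∑ ℓ, (Q m k * (starRingEnd ℂ) (Q n k)) *
            (((S n ℓ : ℝ) : ℂ) * ((lam ℓ : ℝ) : ℂ) * ((S m ℓ : ℝ) : ℂ)) := by
            refine Finset.sum_congr rfl fun k _ => Finset.sum_congr rfl fun m _ =>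
              Finset.sum_congr rfl fun n _ => ?_
            rw [hB n m]
            push_cast
            rw [Finset.mul_sum]
        _ = ∑ k : Fin K, ∑ m, ∑ ℓ, ∑ n, (Q m k * (starRingEnd ℂ) (Q n k)) *
            (((S n ℓ : ℝ) : ℂ) * ((lam ℓ : ℝ) : ℂ) * ((S m ℓ : ℝ) : ℂ)) :=
            Finset.sum_congr rfl fun k _ => Finset.sum_congr rfl fun m _ => Finset.sum_comm
        _ = ∑ k : Fin K, ∑ ℓ, ∑ m, ∑ n, (Q m k * (starRingEnd ℂ) (Q n k)) *
            (((S n ℓ : ℝ) : ℂ) * ((lam ℓ : ℝ) : ℂ) * ((S m ℓ : ℝ) : ℂ)) :=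
            Finset.sum_congr rfl fun k _ => Finset.sum_comm
        _ = ∑ ℓ, ∑ k : Fin K, ∑ m, ∑ n, (Q m k * (starRingEnd ℂ) (Q n k)) *
            (((S n ℓ : ℝ) : ℂ) * ((lam ℓ : ℝ) : ℂ) * ((S m ℓ : ℝ) : ℂ)) :=
            Finset.sum_comm
    rw [hL, Complex.ofReal_sum]
    refine Finset.sum_congr rfl fun ℓ _ => ?_
    have hccC : ((cc ℓ : ℝ) : ℂ) = ∑ k, (starRingEnd ℂ) (M k ℓ) * M k ℓ := by
      simp only [hcc]
      push_cast
      refine Finset.sum_congr rfl fun k _ => ?_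
      rw [conj_mul_self']
      norm_cast
    rw [Complex.ofReal_mul, hccC, Finset.mul_sum]
    refine Finset.sum_congr rfl fun k _ => ?_
    rw [hMconj, hMentry, Finset.sum_mul_sum, Finset.mul_sum]
    refine Finset.sum_congr rfl fun m _ => ?_
    rw [Finset.mul_sum]
    refine Finset.sum_congr rfl fun n _ => ?_
    ring
  -- trace identity
  have htr : ∑ ℓ, lam ℓ = 2 * W * N := by
    have h1 : Matrix.trace (prolateR N W) = ∑ _m : Fin N, 2 * W := by
      rw [Matrix.trace]
      refine Finset.sum_congr rfl fun m _ => ?_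
      simp [Matrix.diag_apply, prolateR]
    have h2 : Matrix.trace (prolateR N W) = ∑ ℓ, lam ℓ := by
      rw [hBmat, Matrix.trace_mul_cycle, hOrth, Matrix.one_mul,
        Matrix.trace_diagonal]
    rw [h1] at h2
    rw [← h2]
    simp [Finset.sum_const, Finset.card_univ, mul_comm]
  -- the integral computation
  have hresid : ∀ f : ℝ, residP (Q * Qᴴ) f
      = (N : ℝ) - ∑ k, ‖(Qᴴ.mulVec (eVec N f)) k‖^2 := by
    intro f
    rw [residP, projB Q hQ (eVec N f)]
    congr 1
    have h1 : ∀ n : Fin N, ‖eVec N f n‖ = 1 := by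
      intro n
      rw [eVec]
      rw [show 2 * (π:ℂ) * (f:ℂ) * ((n:ℕ):ℂ) * Complex.I
          = ((2 * π * f * (n:ℕ) : ℝ) : ℂ) * Complex.I by push_cast; ring]
      rw [Complex.norm_exp_ofReal_mul_I]
    simp [h1]
  set g : ℝ → ℂ := fun f => ∑ k : Fin K, ∑ m, ∑ n, (Q m k * (starRingEnd ℂ) (Q n k)) *
      Complex.exp (2 * (π:ℂ) * (f:ℂ) * (((((n:ℕ):ℝ) - ((m:ℕ):ℝ)) : ℝ) : ℂ) * Complex.I)
    with hgdef
  have hEcast : ∀ (f : ℝ) (t : Fin N), eVec N f t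
      = Complex.exp (2 * (π:ℂ) * (f:ℂ) * ((((t:ℕ):ℝ)) : ℂ) * Complex.I) := by
    intro f t; rw [eVec]; norm_cast
  have hg : ∀ f : ℝ, ((∑ k, ‖(Qᴴ.mulVec (eVec N f)) k‖^2 : ℝ) : ℂ) = g f := by
    intro f
    rw [← dotA]
    simp only [hgdef, dotProduct, Pi.star_apply, Matrix.mulVec,
      Matrix.conjTranspose_apply]
    refine Finset.sum_congr rfl fun k _ => ?_
    have hstar : star (∑ x : Fin N, star (Q x k) * eVec N f x)
        = ∑ m, Q m k * star (eVec N f m) := by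
      rw [star_sum]
      refine Finset.sum_congr rfl fun m _ => ?_
      rw [star_mul', star_star]
    rw [hstar, Finset.sum_mul_sum]
    refine Finset.sum_congr rfl fun m _ => Finset.sum_congr rfl fun n _ => ?_
    rw [hEcast f m, hEcast f n]
    rw [mul_mul_mul_comm]
    congr 1
    exact conjExpMul f _ _
  have hgcont : Continuous g := by
    rw [hgdef]
    refine continuous_finset_sum _ fun k _ => continuous_finset_sum _ fun m _ =>
      continuous_finset_sum _ fun n _ => ?_
    fun_prop
  have hgint : ∫ f in (-W)..W, g f = ∑ k : Fin K, ∑ m, ∑ n,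
      (Q m k * (starRingEnd ℂ) (Q n k)) * ((prolateR N W n m : ℝ) : ℂ) := by
    rw [hgdef]
    rw [intervalIntegral.integral_finset_sum (fun k _ =>
      Continuous.intervalIntegrable (by fun_prop) _ _)]
    refine Finset.sum_congr rfl fun k _ => ?_
    rw [intervalIntegral.integral_finset_sum (fun m _ =>
      Continuous.intervalIntegrable (by fun_prop) _ _)]
    refine Finset.sum_congr rfl fun m _ => ?_
    rw [intervalIntegral.integral_finset_sum (fun n _ =>
      Continuous.intervalIntegrable (by fun_prop) _ _)]
    refine Finset.sum_congr rfl fun n _ => ?_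
    rw [intervalIntegral.integral_const_mul, intC]
    congr 1
    by_cases h : n = m
    · subst h
      simp [prolateR]
    · have hnm : ((n:ℕ):ℝ) - ((m:ℕ):ℝ) ≠ 0 := by
        intro hcon
        apply h
        have : ((n:ℕ):ℝ) = ((m:ℕ):ℝ) := by linarith
        exact Fin.ext (by exact_mod_cast this)
      rw [prolateR]
      simp only [Matrix.of_apply, hnm, if_false, h, if_false]
  have hIntegral : ∫ f in (-W)..W, residP (Q * Qᴴ) f
      = 2 * W * N - ∑ ℓ, lam ℓ * cc ℓ := by
    have heq : ∀ f : ℝ, residP (Q * Qᴴ) f = (N : ℝ) - Complex.reCLM (g f) := by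
      intro f
      rw [hresid f, ← hg f, Complex.reCLM_apply, Complex.ofReal_re]
    rw [intervalIntegral.integral_congr (fun x _ => heq x)]
    have hgrec : Continuous fun x : ℝ => Complex.reCLM (g x) :=
      Complex.reCLM.continuous.comp hgcont
    rw [intervalIntegral.integral_sub (intervalIntegrable_const)
      (hgrec.intervalIntegrable _ _)]
    rw [intervalIntegral.integral_const]
    rw [ContinuousLinearMap.intervalIntegral_comp_comm _
      (Continuous.intervalIntegrable hgcont _ _)]
    rw [hgint, hKey]
    simp only [Complex.reCLM_apply, Complex.ofReal_re, sub_neg_eq_add, smul_eq_mul]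
    ring
  -- final arithmetic
  rw [hIntegral]
  have hKpred : K - 1 < N := by omega
  set μ : ℝ := lam ⟨K - 1, hKpred⟩ with hmu
  have hge : ∀ ℓ : Fin N, (ℓ:ℕ) < K → μ ≤ lam ℓ := by
    intro ℓ h
    exact hAnti.antitone (by rw [Fin.le_def]; simp; omega)
  have hle : ∀ ℓ : Fin N, K ≤ (ℓ:ℕ) → lam ℓ ≤ μ := by
    intro ℓ h
    exact hAnti.antitone (by rw [Fin.le_def]; simp; omega)
  have hcard : (Finset.univ.filter (fun ℓ : Fin N => ¬ K ≤ (ℓ:ℕ))).card = K := by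
    have himg : Finset.univ.filter (fun ℓ : Fin N => ¬ K ≤ (ℓ:ℕ))
        = Finset.univ.image (Fin.castLE hKN) := by
      ext ℓ
      simp only [Finset.mem_filter, Finset.mem_univ, true_and, Finset.mem_image, not_le]
      constructor
      · intro h; exact ⟨⟨ℓ, h⟩, rfl⟩
      · rintro ⟨j, rfl⟩; exact j.isLt
    rw [himg, Finset.card_image_of_injective _ (Fin.castLE_injective _),
      Finset.card_univ, Fintype.card_fin]
  -- split sums
  have hsplit := Finset.sum_filter_add_sum_filter_not Finset.univ
    (fun ℓ : Fin N => K ≤ (ℓ:ℕ)) (fun ℓ => lam ℓ * cc ℓ)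
  have hsplit2 := Finset.sum_filter_add_sum_filter_not Finset.univ
    (fun ℓ : Fin N => K ≤ (ℓ:ℕ)) cc
  have hsplit3 := Finset.sum_filter_add_sum_filter_not Finset.univ
    (fun ℓ : Fin N => K ≤ (ℓ:ℕ)) lam
  -- bound A-part: ∑_{K ≤ ℓ} lam ℓ * cc ℓ ≤ μ * ∑_{K ≤ ℓ} cc ℓ
  have hAbound : ∑ ℓ ∈ Finset.univ.filter (fun ℓ : Fin N => K ≤ (ℓ:ℕ)), lam ℓ * cc ℓ
      ≤ μ * ∑ ℓ ∈ Finset.univ.filter (fun ℓ : Fin N => K ≤ (ℓ:ℕ)), cc ℓ := by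
    rw [Finset.mul_sum]
    refine Finset.sum_le_sum fun ℓ hℓ => ?_
    have hm := Finset.mem_filter.mp hℓ
    exact mul_le_mul_of_nonneg_right (hle ℓ hm.2) (hcc0 ℓ)
  -- bound B-part: μ * ∑_{ℓ < K} (1 - cc ℓ) ≤ ∑_{ℓ < K} lam ℓ * (1 - cc ℓ)
  have hBbound : μ * ∑ ℓ ∈ Finset.univ.filter (fun ℓ : Fin N => ¬ K ≤ (ℓ:ℕ)), (1 - cc ℓ)
      ≤ ∑ ℓ ∈ Finset.univ.filter (fun ℓ : Fin N => ¬ K ≤ (ℓ:ℕ)), lam ℓ * (1 - cc ℓ) := by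
    rw [Finset.mul_sum]
    refine Finset.sum_le_sum fun ℓ hℓ => ?_
    have hm := Finset.mem_filter.mp hℓ
    have h1 : (ℓ:ℕ) < K := by omega
    exact mul_le_mul_of_nonneg_right (hge ℓ h1) (by linarith [hccle ℓ])
  -- key equality: ∑_A cc = ∑_B (1 - cc)
  have hEq : ∑ ℓ ∈ Finset.univ.filter (fun ℓ : Fin N => K ≤ (ℓ:ℕ)), cc ℓ
      = ∑ ℓ ∈ Finset.univ.filter (fun ℓ : Fin N => ¬ K ≤ (ℓ:ℕ)), (1 - cc ℓ) := by
    rw [Finset.sum_sub_distrib, Finset.sum_const, hcard, nsmul_eq_mul, mul_one]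
    have : ∑ ℓ ∈ Finset.univ.filter (fun ℓ : Fin N => ¬ K ≤ (ℓ:ℕ)), cc ℓ
        = (∑ ℓ, cc ℓ) - ∑ ℓ ∈ Finset.univ.filter (fun ℓ : Fin N => K ≤ (ℓ:ℕ)), cc ℓ := by
      linarith [hsplit2]
    rw [this, hsumcc]
    ring
  -- expand lam * (1 - cc) sums
  have hBexp : ∑ ℓ ∈ Finset.univ.filter (fun ℓ : Fin N => ¬ K ≤ (ℓ:ℕ)), lam ℓ * (1 - cc ℓ)
      = (∑ ℓ ∈ Finset.univ.filter (fun ℓ : Fin N => ¬ K ≤ (ℓ:ℕ)), lam ℓ)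
        - ∑ ℓ ∈ Finset.univ.filter (fun ℓ : Fin N => ¬ K ≤ (ℓ:ℕ)), lam ℓ * cc ℓ := by
    rw [← Finset.sum_sub_distrib]
    refine Finset.sum_congr rfl fun ℓ _ => by ring
  have hEq' : μ * ∑ ℓ ∈ Finset.univ.filter (fun ℓ : Fin N => K ≤ (ℓ:ℕ)), cc ℓ
      = μ * ∑ ℓ ∈ Finset.univ.filter (fun ℓ : Fin N => ¬ K ≤ (ℓ:ℕ)), (1 - cc ℓ) := by
    rw [hEq]
  linarith [hAbound, hBbound, hEq', hBexp, hsplit, hsplit3, htr]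



end
end

section
/- Let N ∈ ℕ, W ∈ (0, 1/2), R ≤ N − 2⌊NW⌋ − 1, and let V ∈ ℂ^{(N−2⌊NW⌋−1)×R} have orthonormal columns. Then for Q = [F_{N,W} F̄_{N,W} V], the representation residual satisfies ∫_{−W}^{W} ‖e_f − QQ*e_f‖₂² df = trace(F̄_{N,W}* B_{N,W} F̄_{N,W} − V V* F̄_{N,W}* B_{N,W} F̄_{N,W}). -/
open Matrix MeasureTheory
open scoped Real

noncomputable section

def prolateC (N : ℕ) (W : ℝ) : Matrix (Fin N) (Fin N) ℂ :=
  (prolateR N W).map (fun x => (x : ℂ))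

/-- partial DFT matrix with columns `(1/√N) e_{k/N}`, `|k| ≤ m`. -/
def Fmat (N m : ℕ) : Matrix (Fin N) (Fin (2 * m + 1)) ℂ :=
  Matrix.of fun n i =>
    ((1 / Real.sqrt N : ℝ) : ℂ) *
      Complex.exp (2 * (Real.pi : ℂ) * Complex.I * ((((i : ℕ) : ℤ) - (m : ℤ) : ℤ) : ℂ) *
        ((n : ℕ) : ℂ) / (N : ℂ))

/-- remaining (high-frequency) DFT columns, frequencies `k/N` with `k = m+1, …, N−m−1`. -/
def Fbar (N m : ℕ) : Matrix (Fin N) (Fin (N - (2 * m + 1))) ℂ :=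
  Matrix.of fun n j =>
    ((1 / Real.sqrt N : ℝ) : ℂ) *
      Complex.exp (2 * (Real.pi : ℂ) * Complex.I * (((j : ℕ) + m + 1 : ℕ) : ℂ) *
        ((n : ℕ) : ℂ) / (N : ℂ))

/-! ### Auxiliary lemmas -/

lemma sum_exp_int (N : ℕ) (hN : 0 < N) (c : ℤ) :
    (∑ n : Fin N, Complex.exp (2 * (Real.pi:ℂ) * Complex.I * (c:ℂ) * ((n:ℕ):ℂ) / (N:ℂ))) =
      if (N:ℤ) ∣ c then (N:ℂ) else 0 := by
  have hNC : (N:ℂ) ≠ 0 := Nat.cast_ne_zero.mpr hN.ne'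
  have h2 : (2 * (Real.pi:ℂ) * Complex.I) ≠ 0 := by
    simp [Real.pi_ne_zero, Complex.I_ne_zero]
  set z : ℂ := Complex.exp (2 * (Real.pi:ℂ) * Complex.I * (c:ℂ) / (N:ℂ)) with hz
  have hpow : ∀ n : ℕ,
      Complex.exp (2 * (Real.pi:ℂ) * Complex.I * (c:ℂ) * ((n:ℕ):ℂ) / (N:ℂ)) = z ^ n := by
    intro n
    rw [hz, ← Complex.exp_nat_mul]
    ring_nf
  have hzN : z ^ N = 1 := by
    rw [hz, ← Complex.exp_nat_mul]
    have h : (N:ℂ) * (2 * (Real.pi:ℂ) * Complex.I * (c:ℂ) / (N:ℂ)) = (c:ℂ) * (2 * Real.pi * Complex.I) := by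
      field_simp
    rw [h, Complex.exp_int_mul_two_pi_mul_I]
  have hz1 : z = 1 ↔ (N:ℤ) ∣ c := by
    rw [hz, Complex.exp_eq_one_iff]
    constructor
    · rintro ⟨k, hk⟩
      refine ⟨k, ?_⟩
      have hc : (c:ℂ) = (N:ℂ) * (k:ℂ) := by
        field_simp at hk
        apply mul_left_cancel₀ h2
        linear_combination (2 * (Real.pi:ℂ) * Complex.I) * hk
      exact_mod_cast hc
    · rintro ⟨k, hk⟩
      refine ⟨k, ?_⟩
      rw [hk]; push_cast; field_simp
  calc (∑ n : Fin N, Complex.exp (2 * (Real.pi:ℂ) * Complex.I * (c:ℂ) * ((n:ℕ):ℂ) / (N:ℂ)))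
      = ∑ n : Fin N, z ^ (n:ℕ) := Finset.sum_congr rfl fun n _ => hpow n
    _ = ∑ i ∈ Finset.range N, z ^ i := Fin.sum_univ_eq_sum_range (fun i => z ^ i) N
    _ = if (N:ℤ) ∣ c then (N:ℂ) else 0 := by
        by_cases h : (N:ℤ) ∣ c
        · simp [h, hz1.mpr h]
        · rw [if_neg h]
          have hzne : z ≠ 1 := fun hh => h (hz1.mp hh)
          rw [geom_sum_eq hzne, hzN]
          simp

lemma sum_exp_range (N : ℕ) (hN : 0 < N) (c : ℤ) :
    (∑ n ∈ Finset.range N, Complex.exp (2 * (Real.pi:ℂ) * Complex.I * (c:ℂ) * ((n:ℕ):ℂ) / (N:ℂ))) =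
      if (N:ℤ) ∣ c then (N:ℂ) else 0 := by
  rw [← sum_exp_int N hN c, ← Fin.sum_univ_eq_sum_range
    (fun n : ℕ => Complex.exp (2 * (Real.pi:ℂ) * Complex.I * (c:ℂ) * ((n:ℕ):ℂ) / (N:ℂ))) N]

lemma inner_col (N : ℕ) (hN : 0 < N) (a b : ℤ) (u v : Fin N → ℂ)
    (hu : ∀ n, u n = ((1 / Real.sqrt N : ℝ) : ℂ) *
      Complex.exp (2 * (Real.pi:ℂ) * Complex.I * (a:ℂ) * ((n:ℕ):ℂ) / (N:ℂ)))
    (hv : ∀ n, v n = ((1 / Real.sqrt N : ℝ) : ℂ) *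
      Complex.exp (2 * (Real.pi:ℂ) * Complex.I * (b:ℂ) * ((n:ℕ):ℂ) / (N:ℂ))) :
    ∑ n, star (u n) * v n = if (N:ℤ) ∣ (b - a) then 1 else 0 := by
  have hNC : (N:ℂ) ≠ 0 := Nat.cast_ne_zero.mpr hN.ne'
  have hsq : (((1 / Real.sqrt N : ℝ) : ℂ)) * (((1 / Real.sqrt N : ℝ) : ℂ)) = 1 / (N:ℂ) := by
    rw [← Complex.ofReal_mul]
    rw [show (1 / Real.sqrt N) * (1 / Real.sqrt N) = 1 / N by
      rw [div_mul_div_comm, Real.mul_self_sqrt (Nat.cast_nonneg N), one_mul]]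
    push_cast
    ring
  have key : ∀ n : Fin N, star (u n) * v n =
      (1 / (N:ℂ)) * Complex.exp (2 * (Real.pi:ℂ) * Complex.I * ((b - a : ℤ):ℂ) * ((n:ℕ):ℂ) / (N:ℂ)) := by
    intro n
    rw [hu n, hv n, star_mul']
    rw [show star (((1 / Real.sqrt N : ℝ) : ℂ)) = (((1 / Real.sqrt N : ℝ) : ℂ)) from Complex.conj_ofReal _]
    simp only [Complex.star_def]
    rw [← Complex.exp_conj]
    rw [mul_mul_mul_comm, hsq, ← Complex.exp_add]
    congr 1
    simp only [map_div₀, _root_.map_mul, map_intCast, map_natCast, map_ofNat, Complex.conj_I,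
      Complex.conj_ofReal, Complex.conj_ofNat]
    push_cast
    ring
  rw [Finset.sum_congr rfl fun n _ => key n, ← Finset.mul_sum, sum_exp_int N hN (b - a)]
  split <;> field_simp <;> simp

lemma FmatH_Fmat (N m : ℕ) (hN : 0 < N) (hmN : 2 * m + 1 ≤ N) :
    (Fmat N m)ᴴ * Fmat N m = 1 := by
  ext i i'
  rw [Matrix.mul_apply]
  simp only [conjTranspose_apply]
  rw [inner_col N hN ((i:ℤ) - m) ((i':ℤ) - m) (fun n => Fmat N m n i) (fun n => Fmat N m n i')
    (fun n => rfl) (fun n => rfl)]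
  have hd : ((i':ℤ) - m) - ((i:ℤ) - m) = (i':ℤ) - i := by ring
  rw [hd]
  rcases eq_or_ne i i' with h | h
  · subst h; simp [Matrix.one_apply]
  · rw [if_neg, Matrix.one_apply_ne h]
    intro hdvd
    have h1 : ((i':ℤ) - i) = 0 := by
      refine Int.eq_zero_of_abs_lt_dvd hdvd ?_
      have := i.2; have := i'.2
      rw [abs_lt]
      omega
    exact h (by ext; omega)

lemma FbarH_Fbar (N m : ℕ) (hN : 0 < N) (hmN : 2 * m + 1 ≤ N) :
    (Fbar N m)ᴴ * Fbar N m = 1 := by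
  ext j j'
  rw [Matrix.mul_apply]
  simp only [conjTranspose_apply]
  rw [inner_col N hN ((j:ℤ) + m + 1) ((j':ℤ) + m + 1) (fun n => Fbar N m n j)
    (fun n => Fbar N m n j') (fun n => by simp [Fbar])
    (fun n => by simp [Fbar])]
  have hd : ((j':ℤ) + m + 1) - ((j:ℤ) + m + 1) = (j':ℤ) - j := by ring
  rw [hd]
  rcases eq_or_ne j j' with h | h
  · subst h; simp [Matrix.one_apply]
  · rw [if_neg, Matrix.one_apply_ne h]
    intro hdvd
    have h1 : ((j':ℤ) - j) = 0 := by
      refine Int.eq_zero_of_abs_lt_dvd hdvd ?_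
      have := j.2; have := j'.2
      rw [abs_lt]
      omega
    exact h (by ext; omega)

lemma FmatH_Fbar (N m : ℕ) (hN : 0 < N) (hmN : 2 * m + 1 ≤ N) :
    (Fmat N m)ᴴ * Fbar N m = 0 := by
  ext i j
  rw [Matrix.mul_apply]
  simp only [conjTranspose_apply]
  rw [inner_col N hN ((i:ℤ) - m) ((j:ℤ) + m + 1) (fun n => Fmat N m n i)
    (fun n => Fbar N m n j) (fun n => rfl)
    (fun n => by simp [Fbar])]
  rw [if_neg, Matrix.zero_apply]
  intro hdvd
  have h1 : ((j:ℤ) + m + 1) - ((i:ℤ) - m) = 0 := by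
    refine Int.eq_zero_of_abs_lt_dvd hdvd ?_
    have := i.2; have := j.2
    rw [abs_lt]
    omega
  have := i.2; have := j.2
  omega

lemma mul_star_entry (N : ℕ) (hN : 0 < N) (a : ℤ) (p q : Fin N) :
    (((1 / Real.sqrt N : ℝ):ℂ) * Complex.exp (2*(Real.pi:ℂ)*Complex.I*(a:ℂ)*((p:ℕ):ℂ)/(N:ℂ))) *
      star (((1 / Real.sqrt N : ℝ):ℂ) * Complex.exp (2*(Real.pi:ℂ)*Complex.I*(a:ℂ)*((q:ℕ):ℂ)/(N:ℂ)))
    = (1/(N:ℂ)) * Complex.exp (2*(Real.pi:ℂ)*Complex.I*(a:ℂ)*(((p:ℤ)-(q:ℤ) : ℤ):ℂ)/(N:ℂ)) := by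
  have hsq : (((1 / Real.sqrt N : ℝ) : ℂ)) * (((1 / Real.sqrt N : ℝ) : ℂ)) = 1 / (N:ℂ) := by
    rw [← Complex.ofReal_mul]
    rw [show (1 / Real.sqrt N) * (1 / Real.sqrt N) = 1 / N by
      rw [div_mul_div_comm, Real.mul_self_sqrt (Nat.cast_nonneg N), one_mul]]
    push_cast; ring
  have h1 : star (((1 / Real.sqrt N : ℝ):ℂ) * Complex.exp (2*(Real.pi:ℂ)*Complex.I*(a:ℂ)*((q:ℕ):ℂ)/(N:ℂ)))
      = ((1 / Real.sqrt N : ℝ):ℂ) * Complex.exp (-(2*(Real.pi:ℂ)*Complex.I*(a:ℂ)*((q:ℕ):ℂ)/(N:ℂ))) := by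
    rw [star_mul']
    rw [show star (((1 / Real.sqrt N : ℝ) : ℂ)) = (((1 / Real.sqrt N : ℝ) : ℂ)) from Complex.conj_ofReal _]
    simp only [Complex.star_def]
    rw [← Complex.exp_conj]
    congr 1
    simp only [map_div₀, _root_.map_mul, map_intCast, map_natCast, map_ofNat, Complex.conj_I,
      Complex.conj_ofReal, Complex.conj_ofNat]
    ring
  rw [h1, mul_mul_mul_comm, hsq, ← Complex.exp_add]
  congr 1
  push_cast
  ring

lemma complete (N m : ℕ) (hN : 0 < N) (hmN : 2 * m + 1 ≤ N) :
    Fmat N m * (Fmat N m)ᴴ + Fbar N m * (Fbar N m)ᴴ = 1 := by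
  ext p q
  set d : ℤ := (p:ℤ) - (q:ℤ) with hd
  simp only [Matrix.add_apply, Matrix.mul_apply, conjTranspose_apply]
  have h1 : ∀ i : Fin (2*m+1), Fmat N m p i * star (Fmat N m q i) =
      (1/(N:ℂ)) * Complex.exp (2*(Real.pi:ℂ)*Complex.I*(((i:ℤ) - m : ℤ):ℂ)*(d:ℂ)/(N:ℂ)) := by
    intro i
    exact mul_star_entry N hN ((i:ℤ) - m) p q
  have h2 : ∀ j : Fin (N - (2*m+1)), Fbar N m p j * star (Fbar N m q j) =
      (1/(N:ℂ)) * Complex.exp (2*(Real.pi:ℂ)*Complex.I*(((j:ℤ) + m + 1 : ℤ):ℂ)*(d:ℂ)/(N:ℂ)) := by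
    intro j
    have := mul_star_entry N hN ((j:ℤ) + m + 1) p q
    rw [← this]
    congr 2 <;> simp [Fbar]
  rw [Finset.sum_congr rfl fun i _ => h1 i, Finset.sum_congr rfl fun j _ => h2 j,
    ← Finset.mul_sum, ← Finset.mul_sum, ← mul_add]
  have key : (∑ i : Fin (2*m+1), Complex.exp (2*(Real.pi:ℂ)*Complex.I*(((i:ℤ) - m : ℤ):ℂ)*(d:ℂ)/(N:ℂ)))
      + (∑ j : Fin (N - (2*m+1)), Complex.exp (2*(Real.pi:ℂ)*Complex.I*(((j:ℤ) + m + 1 : ℤ):ℂ)*(d:ℂ)/(N:ℂ)))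
      = Complex.exp (-(2*(Real.pi:ℂ)*Complex.I*(m:ℂ)*(d:ℂ)/(N:ℂ))) *
        (if (N:ℤ) ∣ d then (N:ℂ) else 0) := by
    rw [Fin.sum_univ_eq_sum_range
      (fun t : ℕ => Complex.exp (2*(Real.pi:ℂ)*Complex.I*(((t:ℤ) - m : ℤ):ℂ)*(d:ℂ)/(N:ℂ))) (2*m+1),
      Fin.sum_univ_eq_sum_range
      (fun t : ℕ => Complex.exp (2*(Real.pi:ℂ)*Complex.I*(((t:ℤ) + m + 1 : ℤ):ℂ)*(d:ℂ)/(N:ℂ))) (N - (2*m+1))]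
    have hsplit := Finset.sum_range_add
      (fun t : ℕ => Complex.exp (2*(Real.pi:ℂ)*Complex.I*(((t:ℤ) - m : ℤ):ℂ)*(d:ℂ)/(N:ℂ)))
      (2*m+1) (N - (2*m+1))
    rw [show 2*m+1 + (N - (2*m+1)) = N by omega] at hsplit
    rw [← sum_exp_range N hN d, Finset.mul_sum]
    have hR : (∑ t ∈ Finset.range N, Complex.exp (-(2*(Real.pi:ℂ)*Complex.I*(m:ℂ)*(d:ℂ)/(N:ℂ))) *
        Complex.exp (2*(Real.pi:ℂ)*Complex.I*(d:ℂ)*((t:ℕ):ℂ)/(N:ℂ)))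
        = ∑ t ∈ Finset.range N, Complex.exp (2*(Real.pi:ℂ)*Complex.I*(((t:ℤ) - m : ℤ):ℂ)*(d:ℂ)/(N:ℂ)) := by
      apply Finset.sum_congr rfl
      intro t _
      rw [← Complex.exp_add]
      congr 1
      push_cast
      ring
    rw [hR, hsplit]
    congr 1
    apply Finset.sum_congr rfl
    intro t _
    congr 1
    push_cast
    ring
  rw [key]
  rcases eq_or_ne p q with h | h
  · subst h
    have : d = 0 := by simp [hd]
    rw [this]
    norm_num [Matrix.one_apply]
    rw [inv_mul_cancel₀ (Nat.cast_ne_zero.mpr hN.ne' : (N:ℂ) ≠ 0)]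
  · have hnd : ¬ (N:ℤ) ∣ d := by
      intro hdvd
      have h1 : d = 0 := by
        refine Int.eq_zero_of_abs_lt_dvd hdvd ?_
        have := p.2; have := q.2
        rw [abs_lt, hd]
        omega
      rw [hd] at h1
      exact h (by ext; omega)
    rw [if_neg hnd, Matrix.one_apply_ne h]
    ring

lemma int_kernel (W : ℝ) (d : ℤ) :
    (∫ f in (-W)..W, Complex.exp (2 * (Real.pi:ℂ) * (f:ℂ) * (d:ℂ) * Complex.I)) =
      if d = 0 then ((2*W : ℝ):ℂ) else ((Real.sin (2*Real.pi*W*d) / (Real.pi * d) : ℝ) : ℂ) := by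
  rcases eq_or_ne d 0 with h | h
  · subst h
    simp only [Int.cast_zero, mul_zero, zero_mul, Complex.exp_zero, if_true]
    rw [intervalIntegral.integral_const]
    simp [Complex.real_smul]
    push_cast
    ring
  · rw [if_neg h]
    have hc : (2 * (Real.pi:ℂ) * (d:ℂ) * Complex.I) ≠ 0 := by
      simp [Real.pi_ne_zero, Complex.I_ne_zero, Int.cast_ne_zero.mpr h]
    have harg : ∀ f : ℝ, 2 * (Real.pi:ℂ) * (f:ℂ) * (d:ℂ) * Complex.I
        = (2 * (Real.pi:ℂ) * (d:ℂ) * Complex.I) * (f:ℂ) := by intro f; ring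
    rw [intervalIntegral.integral_congr (g := fun f : ℝ =>
      Complex.exp ((2 * (Real.pi:ℂ) * (d:ℂ) * Complex.I) * (f:ℂ)))
      (fun f _ => by rw [harg f])]
    rw [integral_exp_mul_complex hc]
    have e1 : (2 * (Real.pi:ℂ) * (d:ℂ) * Complex.I) * (W:ℂ) = ((2 * Real.pi * d * W : ℝ):ℂ) * Complex.I := by
      push_cast; ring
    have e2 : (2 * (Real.pi:ℂ) * (d:ℂ) * Complex.I) * ((-W:ℝ):ℂ) = ((-(2 * Real.pi * d * W) : ℝ):ℂ) * Complex.I := by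
      push_cast; ring
    rw [e1, e2, Complex.exp_mul_I, Complex.exp_mul_I]
    rw [Complex.ofReal_neg, Complex.cos_neg, Complex.sin_neg]
    have hπ : (Real.pi:ℂ) ≠ 0 := Complex.ofReal_ne_zero.mpr Real.pi_ne_zero
    have hd : (d:ℂ) ≠ 0 := Int.cast_ne_zero.mpr h
    have hI := Complex.I_ne_zero
    rw [← Complex.ofReal_sin]
    push_cast
    field_simp
    ring_nf

lemma resid_eq {N : ℕ} (P : Matrix (Fin N) (Fin N) ℂ) (hP : Pᴴ = P) (hP2 : P * P = P) (f : ℝ) :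
    ((residP P f : ℝ) : ℂ) =
      ∑ k, ∑ n, ((1 : Matrix (Fin N) (Fin N) ℂ) - P) k n *
        (eVec N f n * (starRingEnd ℂ) (eVec N f k)) := by
  set e := eVec N f with he
  set M := (1 : Matrix (Fin N) (Fin N) ℂ) - P with hM
  have hMH : Mᴴ = M := by rw [hM, conjTranspose_sub, conjTranspose_one, hP]
  have hMM : Mᴴ * M = M := by
    rw [hMH, hM]
    simp [Matrix.sub_mul, Matrix.mul_sub, hP2]
  have hr : e - P.mulVec e = M.mulVec e := by
    rw [hM, Matrix.sub_mulVec, Matrix.one_mulVec]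
  have hzz : ∀ z : ℂ, ((‖z‖^2 : ℝ) : ℂ) = (starRingEnd ℂ) z * z := by
    intro z
    rw [← Complex.normSq_eq_conj_mul_self, ← Complex.sq_norm]
  have h1 : ((residP P f : ℝ):ℂ) = ∑ n, (starRingEnd ℂ) ((M.mulVec e) n) * ((M.mulVec e) n) := by
    rw [residP, Complex.ofReal_sum]
    apply Finset.sum_congr rfl
    intro n _
    rw [hzz, ← he]
    first
    | rfl
    | rw [hr]
  rw [h1]
  have h2 : ∑ n, (starRingEnd ℂ) ((M.mulVec e) n) * ((M.mulVec e) n)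
      = star (M.mulVec e) ⬝ᵥ (M.mulVec e) := rfl
  rw [h2, Matrix.star_mulVec, Matrix.dotProduct_mulVec, Matrix.vecMul_vecMul, hMM]
  simp only [dotProduct, Matrix.vecMul, dotProduct, Finset.sum_mul]
  rw [Finset.sum_comm]
  apply Finset.sum_congr rfl
  intro k _
  apply Finset.sum_congr rfl
  intro n _
  simp only [Pi.star_apply, Complex.star_def]
  ring

lemma eVec_prod (N : ℕ) (f : ℝ) (k n : Fin N) :
    eVec N f n * (starRingEnd ℂ) (eVec N f k) =
      Complex.exp (2 * (Real.pi:ℂ) * (f:ℂ) * ((((n:ℤ) - (k:ℤ)) : ℤ):ℂ) * Complex.I) := by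
  unfold eVec
  rw [← Complex.exp_conj, ← Complex.exp_add]
  congr 1
  simp only [_root_.map_mul, map_natCast, map_ofNat, Complex.conj_I, Complex.conj_ofReal]
  push_cast
  ring

lemma int_eVec_prod (N : ℕ) (W : ℝ) (k n : Fin N) :
    (∫ f in (-W)..W, eVec N f n * (starRingEnd ℂ) (eVec N f k)) = prolateC N W n k := by
  rw [intervalIntegral.integral_congr (g := fun f : ℝ =>
    Complex.exp (2 * (Real.pi:ℂ) * (f:ℂ) * ((((n:ℤ) - (k:ℤ)) : ℤ):ℂ) * Complex.I))
    (fun f _ => eVec_prod N f k n)]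
  rw [int_kernel W ((n:ℤ) - (k:ℤ))]
  unfold prolateC prolateR
  simp only [Matrix.map_apply, Matrix.of_apply]
  rcases eq_or_ne n k with h | h
  · subst h
    simp
  · rw [if_neg, if_neg h]
    · congr 1
      have : (((n:ℤ) - (k:ℤ) : ℤ) : ℝ) = ((n:ℕ):ℝ) - ((k:ℕ):ℝ) := by push_cast; ring
      rw [this]
    · intro hc
      exact h (by ext; omega)

lemma eVec_prod_continuous (N : ℕ) (k n : Fin N) :
    Continuous fun f : ℝ => eVec N f n * (starRingEnd ℂ) (eVec N f k) := by
  apply Continuous.mul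
  · exact Complex.continuous_exp.comp (by fun_prop)
  · exact Complex.continuous_conj.comp (Complex.continuous_exp.comp (by fun_prop))

lemma trace_mul_sum {N : ℕ} (A B : Matrix (Fin N) (Fin N) ℂ) :
    ∑ k, ∑ n, A k n * B n k = Matrix.trace (A * B) := by
  simp [Matrix.trace, Matrix.mul_apply, Matrix.diag]

/-- for `Q = [F_{N,W}  F̄_{N,W} V]`,
`∫_{−W}^{W} ‖e_f − QQ*e_f‖₂² df
  = trace(F̄* B F̄ − V V* F̄* B F̄)`. -/
theorem stmt6 (N : ℕ) (W : ℝ) (hW : W ∈ Set.Ioo (0 : ℝ) (1 / 2))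
    (m : ℕ) (hm : m = ⌊(N : ℝ) * W⌋₊)
    (R : ℕ) (hR : R ≤ N - (2 * m + 1))
    (V : Matrix (Fin (N - (2 * m + 1))) (Fin R) ℂ) (hV : Vᴴ * V = 1) :
    ((∫ f in (-W)..W,
        residP (Matrix.fromCols (Fmat N m) (Fbar N m * V) *
          (Matrix.fromCols (Fmat N m) (Fbar N m * V))ᴴ) f : ℝ) : ℂ)
      = Matrix.trace ((Fbar N m)ᴴ * prolateC N W * Fbar N m -
          V * Vᴴ * ((Fbar N m)ᴴ * prolateC N W * Fbar N m)) := by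
  rcases Nat.eq_zero_or_pos N with hN0 | hN
  · subst hN0
    simp [residP, Matrix.trace]
  -- main case
  have hmN : 2 * m + 1 ≤ N := by
    have h1 : (m:ℝ) ≤ (N:ℝ) * W := by
      rw [hm]; exact Nat.floor_le (mul_nonneg (Nat.cast_nonneg N) hW.1.le)
    have h2 : (N:ℝ) * W < (N:ℝ) * (1/2) := by
      exact mul_lt_mul_of_pos_left hW.2 (by exact_mod_cast hN)
    have h3 : (2*m : ℝ) < (N:ℝ) := by nlinarith
    have h4 : 2*m < N := by exact_mod_cast h3
    omega
  set F := Fmat N m with hF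
  set Fb := Fbar N m with hFb
  set B := prolateC N W with hB
  set Q := Matrix.fromCols F (Fb * V) with hQdef
  have hFbF : Fbᴴ * F = 0 := by
    have h := congrArg conjTranspose (FmatH_Fbar N m hN hmN)
    simpa using h
  have hQ : Qᴴ * Q = 1 := by
    rw [hQdef, conjTranspose_fromCols_eq_fromRows_conjTranspose, fromRows_mul_fromCols,
      FmatH_Fmat N m hN hmN, conjTranspose_mul,
      show Fᴴ * (Fb * V) = 0 by rw [← Matrix.mul_assoc, FmatH_Fbar N m hN hmN, Matrix.zero_mul],
      show Vᴴ * Fbᴴ * F = 0 by rw [Matrix.mul_assoc, hFbF, Matrix.mul_zero],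
      show Vᴴ * Fbᴴ * (Fb * V) = 1 by
        rw [Matrix.mul_assoc, ← Matrix.mul_assoc Fbᴴ, FbarH_Fbar N m hN hmN, Matrix.one_mul, hV]]
    exact Matrix.fromBlocks_one
  set P := Q * Qᴴ with hPdef
  have hPH : Pᴴ = P := by
    rw [hPdef, conjTranspose_mul, conjTranspose_conjTranspose]
  have hP2 : P * P = P := by
    rw [hPdef, Matrix.mul_assoc, ← Matrix.mul_assoc Qᴴ, hQ, Matrix.one_mul]
  -- the integral
  rw [← intervalIntegral.integral_ofReal]
  rw [intervalIntegral.integral_congr (g := fun f : ℝ =>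
    ∑ k, ∑ n, ((1 : Matrix (Fin N) (Fin N) ℂ) - P) k n *
      (eVec N f n * (starRingEnd ℂ) (eVec N f k)))
    (fun f _ => resid_eq P hPH hP2 f)]
  rw [intervalIntegral.integral_finset_sum (f := fun k (f : ℝ) => ∑ n, ((1 : Matrix (Fin N) (Fin N) ℂ) - P) k n *
      (eVec N f n * (starRingEnd ℂ) (eVec N f k))) (fun k _ =>
    ((continuous_finset_sum _ fun n _ => (continuous_const.mul
      (eVec_prod_continuous N k n))).intervalIntegrable _ _))]
  have hsum : ∀ k : Fin N, (∫ f in (-W)..W, ∑ n, ((1 : Matrix (Fin N) (Fin N) ℂ) - P) k n *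
      (eVec N f n * (starRingEnd ℂ) (eVec N f k)))
      = ∑ n, ((1 : Matrix (Fin N) (Fin N) ℂ) - P) k n * B n k := by
    intro k
    rw [intervalIntegral.integral_finset_sum (f := fun n (f : ℝ) => ((1 : Matrix (Fin N) (Fin N) ℂ) - P) k n *
        (eVec N f n * (starRingEnd ℂ) (eVec N f k))) (fun n _ =>
      ((continuous_const.mul (eVec_prod_continuous N k n)).intervalIntegrable _ _))]
    apply Finset.sum_congr rfl
    intro n _
    rw [intervalIntegral.integral_const_mul, int_eVec_prod N W k n, hB]
  rw [Finset.sum_congr rfl fun k _ => hsum k, trace_mul_sum]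
  -- trace algebra
  have hPexp : (1 : Matrix (Fin N) (Fin N) ℂ) - P = Fb * Fbᴴ - Fb * (V * Vᴴ) * Fbᴴ := by
    have hc := complete N m hN hmN
    rw [hPdef, hQdef, conjTranspose_fromCols_eq_fromRows_conjTranspose,
      fromCols_mul_fromRows]
    rw [show F * Fᴴ + Fb * V * (Fb * V)ᴴ = F * Fᴴ + Fb * (V * Vᴴ) * Fbᴴ by
      rw [conjTranspose_mul]
      simp only [Matrix.mul_assoc]]
    rw [← hF, ← hFb] at hc
    rw [← hc]
    abel
  rw [hPexp, Matrix.sub_mul, Matrix.trace_sub, Matrix.trace_sub]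
  congr 1
  · simp only [Matrix.mul_assoc]
    rw [Matrix.trace_mul_comm]
    simp only [Matrix.mul_assoc]
  · simp only [Matrix.mul_assoc]
    rw [Matrix.trace_mul_comm]
    simp only [Matrix.mul_assoc]

end
end

section
/- For any M×N complex matrices A and B with M ≤ N, having singular values α₀ ≥ α₁ ≥ ⋯ ≥ α_{M−1} ≥ 0 and β₀ ≥ β₁ ≥ ⋯ ≥ β_{M−1} ≥ 0 respectively, |trace(A B*)| ≤ Σ_{m=0}^{M−1} α_m β_m. -/
open Matrix

noncomputable section

private def ext1 (M : ℕ) (h : Fin M → ℝ) : ℕ → ℝ :=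
  fun i => if hi : i < M then h ⟨i, hi⟩ else 0

private def ext2 (M : ℕ) (h : Fin M → Fin M → ℝ) : ℕ → ℕ → ℝ :=
  fun i j => if hi : i < M then if hj : j < M then h ⟨i, hi⟩ ⟨j, hj⟩ else 0 else 0

private lemma swap_Ico (K M : ℕ) (F : ℕ → ℕ → ℝ) :
    ∑ m ∈ Finset.range K, ∑ l ∈ Finset.Ico m M, F m l
      = ∑ l ∈ Finset.range M, ∑ m ∈ Finset.range (min (l + 1) K), F m l := by
  have h1 : ∀ m, Finset.Ico m M = (Finset.range M).filter (fun l => m ≤ l) := by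
    intro m; ext l; simp [Finset.mem_Ico, Finset.mem_filter, and_comm]
  have h2 : ∀ l : ℕ, Finset.range (min (l + 1) K) = (Finset.range K).filter (fun m => m ≤ l) := by
    intro l; ext m
    simp only [Finset.mem_range, Finset.mem_filter, Nat.lt_min, Nat.lt_succ_iff]
    tauto
  simp_rw [h1, Finset.sum_filter]
  rw [Finset.sum_comm]
  simp_rw [h2, Finset.sum_filter]

private lemma telescope (M : ℕ) (f : ℕ → ℝ) (hfM : f M = 0) (n : ℕ) (hn : n ≤ M) :
    f n = ∑ k ∈ Finset.Ico n M, (f k - f (k + 1)) := by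
  rw [Finset.sum_Ico_eq_sum_range]
  simp only [Nat.add_assoc]
  rw [Finset.sum_range_sub' (fun t => f (n + t))]
  simp [Nat.add_sub_cancel' hn, hfM]

/-- block sums of a nonneg matrix with row/col sums ≤ 1 are at most `min K L`. -/
private lemma block2 (M : ℕ) (w : ℕ → ℕ → ℝ) (hw0 : ∀ i j, 0 ≤ w i j)
    (hrow : ∀ i, ∑ j ∈ Finset.range M, w i j ≤ 1)
    (hcol : ∀ j, ∑ i ∈ Finset.range M, w i j ≤ 1)
    (K L : ℕ) (hK : K ≤ M) (hL : L ≤ M) :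
    ∑ i ∈ Finset.range K, ∑ j ∈ Finset.range L, w i j ≤ ((min K L : ℕ) : ℝ) := by
  have key : ∀ (w : ℕ → ℕ → ℝ), (∀ i j, 0 ≤ w i j) →
      (∀ i, ∑ j ∈ Finset.range M, w i j ≤ 1) → ∀ K L : ℕ, L ≤ M →
      ∑ i ∈ Finset.range K, ∑ j ∈ Finset.range L, w i j ≤ (K : ℝ) := by
    intro w hw0 hrow K L hL
    calc ∑ i ∈ Finset.range K, ∑ j ∈ Finset.range L, w i j
        ≤ ∑ i ∈ Finset.range K, (1 : ℝ) := by
          refine Finset.sum_le_sum fun i _ => ?_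
          refine le_trans (Finset.sum_le_sum_of_subset_of_nonneg
            (Finset.range_subset_range.2 hL) (fun j _ _ => hw0 i j)) (hrow i)
      _ = (K : ℝ) := by simp
  rw [Nat.cast_min]
  refine le_min (key w hw0 hrow K L hL) ?_
  rw [Finset.sum_comm]
  exact key (fun i j => w j i) (fun i j => hw0 j i) hcol L K hK

private lemma keylem (M : ℕ) (α β : Fin M → ℝ) (cP cQ : Fin M → Fin M → ℝ)
    (hα0 : ∀ i, 0 ≤ α i) (hβ0 : ∀ i, 0 ≤ β i)
    (hαm : ∀ i j : Fin M, i ≤ j → α j ≤ α i) (hβm : ∀ i j : Fin M, i ≤ j → β j ≤ β i)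
    (hcP0 : ∀ i j, 0 ≤ cP i j) (hcQ0 : ∀ i j, 0 ≤ cQ i j)
    (hProw : ∀ i, ∑ j, cP i j ^ 2 ≤ 1) (hPcol : ∀ j, ∑ i, cP i j ^ 2 ≤ 1)
    (hQrow : ∀ i, ∑ j, cQ i j ^ 2 ≤ 1) (hQcol : ∀ j, ∑ i, cQ i j ^ 2 ≤ 1) :
    ∑ i : Fin M, ∑ j : Fin M, α i * β j * (cP i j * cQ i j) ≤ ∑ m, α m * β m := by
  set f : ℕ → ℝ := ext1 M α with hf
  set g : ℕ → ℝ := ext1 M β with hg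
  set u : ℕ → ℕ → ℝ := ext2 M cP with hu
  set v : ℕ → ℕ → ℝ := ext2 M cQ with hv
  set c : ℕ → ℕ → ℝ := fun i j => u i j * v i j with hc
  set a : ℕ → ℝ := fun k => f k - f (k + 1) with ha
  set b : ℕ → ℝ := fun l => g l - g (l + 1) with hb
  have hfM : f M = 0 := by simp [hf, ext1]
  have hgM : g M = 0 := by simp [hg, ext1]
  have hf0 : ∀ i, 0 ≤ f i := by
    intro i; simp only [hf, ext1]; split
    · exact hα0 _
    · exact le_rfl
  have hg0 : ∀ i, 0 ≤ g i := by
    intro i; simp only [hg, ext1]; split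
    · exact hβ0 _
    · exact le_rfl
  have hfmono : ∀ k, f (k + 1) ≤ f k := by
    intro k
    simp only [hf, ext1]
    split
    · next h1 =>
      split
      · next h2 => exact hαm ⟨k, h2⟩ ⟨k + 1, h1⟩ (by simp [Fin.le_def])
      · omega
    · next h1 =>
      split
      · exact hα0 _
      · exact le_rfl
  have hgmono : ∀ k, g (k + 1) ≤ g k := by
    intro k
    simp only [hg, ext1]
    split
    · next h1 =>
      split
      · next h2 => exact hβm ⟨k, h2⟩ ⟨k + 1, h1⟩ (by simp [Fin.le_def])
      · omega
    · next h1 =>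
      split
      · exact hβ0 _
      · exact le_rfl
  have ha0 : ∀ k, 0 ≤ a k := fun k => sub_nonneg.2 (hfmono k)
  have hb0 : ∀ l, 0 ≤ b l := fun l => sub_nonneg.2 (hgmono l)
  have htelf : ∀ i, i ≤ M → f i = ∑ k ∈ Finset.Ico i M, a k :=
    fun i hi => telescope M f hfM i hi
  have htelg : ∀ j, j ≤ M → g j = ∑ l ∈ Finset.Ico j M, b l :=
    fun j hj => telescope M g hgM j hj
  have hu0 : ∀ i j, 0 ≤ u i j := by
    intro i j; simp only [hu, ext2]
    split
    · split
      · exact hcP0 _ _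
      · exact le_rfl
    · exact le_rfl
  have hv0 : ∀ i j, 0 ≤ v i j := by
    intro i j; simp only [hv, ext2]
    split
    · split
      · exact hcQ0 _ _
      · exact le_rfl
    · exact le_rfl
  have hc0 : ∀ i j, 0 ≤ c i j := fun i j => mul_nonneg (hu0 i j) (hv0 i j)
  -- row and column bounds for squared entries
  have hrowgen : ∀ (cX : Fin M → Fin M → ℝ), (∀ i, ∑ j, cX i j ^ 2 ≤ 1) →
      ∀ i, ∑ j ∈ Finset.range M, (ext2 M cX) i j ^ 2 ≤ 1 := by
    intro cX hX i
    by_cases hi : i < M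
    · rw [← Fin.sum_univ_eq_sum_range]
      refine le_trans (le_of_eq (Finset.sum_congr rfl fun j _ => ?_)) (hX ⟨i, hi⟩)
      simp [ext2, hi]
    · simp [ext2, hi]
  have hcolgen : ∀ (cX : Fin M → Fin M → ℝ), (∀ j, ∑ i, cX i j ^ 2 ≤ 1) →
      ∀ j, ∑ i ∈ Finset.range M, (ext2 M cX) i j ^ 2 ≤ 1 := by
    intro cX hX j
    by_cases hj : j < M
    · rw [← Fin.sum_univ_eq_sum_range]
      refine le_trans (le_of_eq (Finset.sum_congr rfl fun i _ => ?_)) (hX ⟨j, hj⟩)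
      simp [ext2, hj]
    · simp [ext2, hj]
  -- the block bound via Cauchy-Schwarz
  have hS : ∀ K L : ℕ, K ≤ M → L ≤ M →
      ∑ i ∈ Finset.range K, ∑ j ∈ Finset.range L, c i j ≤ ((min K L : ℕ) : ℝ) := by
    intro K L hK hL
    have hu2 : ∑ i ∈ Finset.range K, ∑ j ∈ Finset.range L, u i j ^ 2 ≤ ((min K L : ℕ) : ℝ) :=
      block2 M (fun i j => u i j ^ 2) (fun i j => sq_nonneg _)
        (hrowgen cP hProw) (hcolgen cP hPcol) K L hK hL
    have hv2 : ∑ i ∈ Finset.range K, ∑ j ∈ Finset.range L, v i j ^ 2 ≤ ((min K L : ℕ) : ℝ) :=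
      block2 M (fun i j => v i j ^ 2) (fun i j => sq_nonneg _)
        (hrowgen cQ hQrow) (hcolgen cQ hQcol) K L hK hL
    have eu : ∑ p ∈ (Finset.range K) ×ˢ (Finset.range L), u p.1 p.2 ^ 2
        = ∑ i ∈ Finset.range K, ∑ j ∈ Finset.range L, u i j ^ 2 :=
      Finset.sum_product' _ _ (fun i j => u i j ^ 2)
    have ev : ∑ p ∈ (Finset.range K) ×ˢ (Finset.range L), v p.1 p.2 ^ 2
        = ∑ i ∈ Finset.range K, ∑ j ∈ Finset.range L, v i j ^ 2 :=
      Finset.sum_product' _ _ (fun i j => v i j ^ 2)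
    have ec : ∑ p ∈ (Finset.range K) ×ˢ (Finset.range L), u p.1 p.2 * v p.1 p.2
        = ∑ i ∈ Finset.range K, ∑ j ∈ Finset.range L, c i j :=
      Finset.sum_product' _ _ (fun i j => u i j * v i j)
    have hcs := Finset.sum_mul_sq_le_sq_mul_sq ((Finset.range K) ×ˢ (Finset.range L))
      (fun p => u p.1 p.2) (fun p => v p.1 p.2)
    rw [eu, ev, ec] at hcs
    have hS0 : 0 ≤ ∑ i ∈ Finset.range K, ∑ j ∈ Finset.range L, c i j :=
      Finset.sum_nonneg fun i _ => Finset.sum_nonneg fun j _ => hc0 i j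
    have hm0 : (0 : ℝ) ≤ ((min K L : ℕ) : ℝ) := Nat.cast_nonneg _
    have hV0 : 0 ≤ ∑ i ∈ Finset.range K, ∑ j ∈ Finset.range L, v i j ^ 2 :=
      Finset.sum_nonneg fun i _ => Finset.sum_nonneg fun j _ => sq_nonneg _
    have h2 : (∑ i ∈ Finset.range K, ∑ j ∈ Finset.range L, c i j) ^ 2
        ≤ ((min K L : ℕ) : ℝ) ^ 2 := by
      refine le_trans hcs ?_
      calc (∑ i ∈ Finset.range K, ∑ j ∈ Finset.range L, u i j ^ 2)
            * ∑ i ∈ Finset.range K, ∑ j ∈ Finset.range L, v i j ^ 2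
          ≤ ((min K L : ℕ) : ℝ) * ((min K L : ℕ) : ℝ) := mul_le_mul hu2 hv2 hV0 hm0
        _ = ((min K L : ℕ) : ℝ) ^ 2 := (sq _).symm
    exact (pow_le_pow_iff_left₀ hS0 hm0 two_ne_zero).1 h2
  -- Abel summation rearrangement of the LHS
  set G : ℕ → ℝ := fun i => ∑ j ∈ Finset.range M, g j * c i j with hG
  set S' : ℕ → ℕ → ℝ := fun k l => ∑ i ∈ Finset.range (min (k + 1) M),
      ∑ j ∈ Finset.range (min (l + 1) M), c i j with hS'
  have hGsum : ∀ K : ℕ, K ≤ M → ∑ i ∈ Finset.range K, G i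
      = ∑ l ∈ Finset.range M, b l * (∑ i ∈ Finset.range K,
          ∑ j ∈ Finset.range (min (l + 1) M), c i j) := by
    intro K hK
    calc ∑ i ∈ Finset.range K, G i
        = ∑ i ∈ Finset.range K, ∑ j ∈ Finset.range M,
            ∑ l ∈ Finset.Ico j M, (b l * c i j) := by
          refine Finset.sum_congr rfl fun i _ => Finset.sum_congr rfl fun j hj => ?_
          rw [htelg j (le_of_lt (Finset.mem_range.1 hj)), Finset.sum_mul]
      _ = ∑ i ∈ Finset.range K, ∑ l ∈ Finset.range M,
            ∑ j ∈ Finset.range (min (l + 1) M), (b l * c i j) := by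
          refine Finset.sum_congr rfl fun i _ => ?_
          exact swap_Ico M M (fun j l => b l * c i j)
      _ = ∑ l ∈ Finset.range M, ∑ i ∈ Finset.range K,
            ∑ j ∈ Finset.range (min (l + 1) M), (b l * c i j) := Finset.sum_comm
      _ = _ := by
          refine Finset.sum_congr rfl fun l _ => ?_
          rw [Finset.mul_sum]
          exact Finset.sum_congr rfl fun i _ => (Finset.mul_sum _ _ _).symm
  have hT : ∑ i ∈ Finset.range M, ∑ j ∈ Finset.range M, f i * g j * c i j
      = ∑ k ∈ Finset.range M, a k * ∑ l ∈ Finset.range M, b l * S' k l := by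
    calc ∑ i ∈ Finset.range M, ∑ j ∈ Finset.range M, f i * g j * c i j
        = ∑ i ∈ Finset.range M, f i * G i := by
          refine Finset.sum_congr rfl fun i _ => ?_
          rw [hG, Finset.mul_sum]
          exact Finset.sum_congr rfl fun j _ => (mul_assoc _ _ _)
      _ = ∑ i ∈ Finset.range M, ∑ k ∈ Finset.Ico i M, (a k * G i) := by
          refine Finset.sum_congr rfl fun i hi => ?_
          rw [htelf i (le_of_lt (Finset.mem_range.1 hi)), Finset.sum_mul]
      _ = ∑ k ∈ Finset.range M, ∑ i ∈ Finset.range (min (k + 1) M), (a k * G i) :=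
          swap_Ico M M (fun i k => a k * G i)
      _ = ∑ k ∈ Finset.range M, a k * ∑ l ∈ Finset.range M, b l * S' k l := by
          refine Finset.sum_congr rfl fun k hk => ?_
          rw [← Finset.mul_sum, hGsum (min (k + 1) M) (min_le_right _ _)]
  have hR : ∑ m ∈ Finset.range M, f m * g m
      = ∑ k ∈ Finset.range M, a k * ∑ l ∈ Finset.range M,
          ((min (l + 1) (min (k + 1) M) : ℕ) : ℝ) * b l := by
    calc ∑ m ∈ Finset.range M, f m * g m
        = ∑ m ∈ Finset.range M, ∑ k ∈ Finset.Ico m M, (a k * g m) := by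
          refine Finset.sum_congr rfl fun m hm => ?_
          rw [htelf m (le_of_lt (Finset.mem_range.1 hm)), Finset.sum_mul]
      _ = ∑ k ∈ Finset.range M, ∑ m ∈ Finset.range (min (k + 1) M), (a k * g m) :=
          swap_Ico M M (fun m k => a k * g m)
      _ = _ := by
          refine Finset.sum_congr rfl fun k hk => ?_
          rw [← Finset.mul_sum]
          congr 1
          calc ∑ m ∈ Finset.range (min (k + 1) M), g m
              = ∑ m ∈ Finset.range (min (k + 1) M), ∑ l ∈ Finset.Ico m M, b l := by
                refine Finset.sum_congr rfl fun m hm => ?_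
                exact htelg m (le_trans (le_of_lt (Finset.mem_range.1 hm)) (min_le_right _ _))
            _ = ∑ l ∈ Finset.range M, ∑ m ∈ Finset.range (min (l + 1) (min (k + 1) M)), b l :=
                swap_Ico (min (k + 1) M) M (fun m l => b l)
            _ = ∑ l ∈ Finset.range M, ((min (l + 1) (min (k + 1) M) : ℕ) : ℝ) * b l := by
                refine Finset.sum_congr rfl fun l _ => ?_
                rw [Finset.sum_const, nsmul_eq_mul, Finset.card_range]
  -- compare term by term
  have hmain : ∑ i ∈ Finset.range M, ∑ j ∈ Finset.range M, f i * g j * c i j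
      ≤ ∑ m ∈ Finset.range M, f m * g m := by
    rw [hT, hR]
    refine Finset.sum_le_sum fun k hk => ?_
    refine mul_le_mul_of_nonneg_left ?_ (ha0 k)
    refine Finset.sum_le_sum fun l hl => ?_
    have hSkl : S' k l ≤ ((min (l + 1) (min (k + 1) M) : ℕ) : ℝ) := by
      have := hS (min (k + 1) M) (min (l + 1) M) (min_le_right _ _) (min_le_right _ _)
      have heq : min (min (k + 1) M) (min (l + 1) M) = min (l + 1) (min (k + 1) M) := by omega
      rw [heq] at this
      exact this
    calc b l * S' k l ≤ b l * ((min (l + 1) (min (k + 1) M) : ℕ) : ℝ) :=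
          mul_le_mul_of_nonneg_left hSkl (hb0 l)
      _ = _ := mul_comm _ _
  -- transfer between Fin sums and range sums
  have h1 : ∑ i : Fin M, ∑ j : Fin M, α i * β j * (cP i j * cQ i j)
      = ∑ i ∈ Finset.range M, ∑ j ∈ Finset.range M, f i * g j * c i j := by
    rw [← Fin.sum_univ_eq_sum_range]
    refine Finset.sum_congr rfl fun i _ => ?_
    rw [← Fin.sum_univ_eq_sum_range]
    refine Finset.sum_congr rfl fun j _ => ?_
    simp [hf, hg, hc, hu, hv, ext1, ext2]
  have h2 : ∑ m : Fin M, α m * β m = ∑ m ∈ Finset.range M, f m * g m := by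
    rw [← Fin.sum_univ_eq_sum_range]
    refine Finset.sum_congr rfl fun m _ => ?_
    simp [hf, hg, ext1]
  rw [h1, h2]
  exact hmain


/-- `IsSVD A σ` : `σ` lists the singular values of `A` in decreasing order
(via a full singular value decomposition; `A` is `M×N` with `M ≤ N`). -/
def IsSVD {M N : ℕ} (A : Matrix (Fin M) (Fin N) ℂ) (σ : Fin M → ℝ) : Prop :=
  (∀ i, 0 ≤ σ i) ∧ (∀ i j : Fin M, i ≤ j → σ j ≤ σ i) ∧
  ∃ U : Matrix (Fin M) (Fin M) ℂ, ∃ V : Matrix (Fin N) (Fin N) ℂ,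
    Uᴴ * U = 1 ∧ Vᴴ * V = 1 ∧
    A = U * (Matrix.of fun (i : Fin M) (j : Fin N) =>
      if (i : ℕ) = (j : ℕ) then ((σ i : ℝ) : ℂ) else 0) * Vᴴ

/-- Von Neumann's trace inequality variant:
`|trace(A B*)| ≤ Σ_m α_m β_m`. -/
theorem stmt7 (M N : ℕ) (hMN : M ≤ N)
    (A B : Matrix (Fin M) (Fin N) ℂ) (α β : Fin M → ℝ)
    (hA : IsSVD A α) (hB : IsSVD B β) :
    ‖Matrix.trace (A * Bᴴ)‖ ≤ ∑ m, α m * β m := by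
  obtain ⟨hα0, hαm, U, V, hU, hV, hAeq⟩ := hA
  obtain ⟨hβ0, hβm, U', V', hU', hV', hBeq⟩ := hB
  set e : Fin M → Fin N := Fin.castLE hMN with he
  set P : Matrix (Fin N) (Fin N) ℂ := Vᴴ * V' with hP
  set Q : Matrix (Fin M) (Fin M) ℂ := U'ᴴ * U with hQ
  set Dα : Matrix (Fin M) (Fin N) ℂ := Matrix.of fun (i : Fin M) (j : Fin N) =>
      if (i : ℕ) = (j : ℕ) then ((α i : ℝ) : ℂ) else 0 with hDα
  set Dβ : Matrix (Fin M) (Fin N) ℂ := Matrix.of fun (i : Fin M) (j : Fin N) =>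
      if (i : ℕ) = (j : ℕ) then ((β i : ℝ) : ℂ) else 0 with hDβ
  -- diagonal multiplications
  have hD : ∀ (X : Matrix (Fin N) (Fin M) ℂ) (i j : Fin M),
      (Dα * X) i j = (α i : ℂ) * X (e i) j := by
    intro X i j
    rw [Matrix.mul_apply, Finset.sum_eq_single (e i)]
    · simp [hDα, he]
    · intro n _ hn
      have hne : ¬((i : ℕ) = (n : ℕ)) := by
        intro h
        exact hn (by simp [he, Fin.ext_iff, ← h])
      simp [hDα, hne]
    · simp
  have hDr : ∀ (X : Matrix (Fin N) (Fin N) ℂ) (q : Fin N) (j : Fin M),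
      (X * Dβᴴ) q j = X q (e j) * (β j : ℂ) := by
    intro X q j
    rw [Matrix.mul_apply, Finset.sum_eq_single (e j)]
    · simp [hDβ, he, Matrix.conjTranspose_apply]
    · intro n _ hn
      have hne : ¬((j : ℕ) = (n : ℕ)) := by
        intro h
        exact hn (by simp [he, Fin.ext_iff, ← h])
      simp [hDβ, hne, Matrix.conjTranspose_apply]
    · simp
  -- trace formula
  have h1 : A * Bᴴ = U * (Dα * (P * (Dβᴴ * U'ᴴ))) := by
    rw [hAeq, hBeq, hP]
    simp only [conjTranspose_mul, conjTranspose_conjTranspose, Matrix.mul_assoc]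
  have h2 : Matrix.trace (A * Bᴴ) = Matrix.trace (Dα * (P * (Dβᴴ * Q))) := by
    rw [h1, Matrix.trace_mul_comm, hQ]
    simp only [Matrix.mul_assoc]
  have htr : Matrix.trace (A * Bᴴ)
      = ∑ i : Fin M, ∑ j : Fin M, ((α i : ℂ) * (β j : ℂ)) * (P (e i) (e j) * Q j i) := by
    rw [h2, show P * (Dβᴴ * Q) = P * Dβᴴ * Q from (Matrix.mul_assoc _ _ _).symm,
      show Dα * (P * Dβᴴ * Q) = Dα * (P * Dβᴴ) * Q from by simp only [Matrix.mul_assoc],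
      Matrix.trace]
    refine Finset.sum_congr rfl fun i _ => ?_
    rw [Matrix.diag_apply, show (Dα * (P * Dβᴴ) * Q) i i = (Dα * ((P * Dβᴴ) * Q)) i i from by
        rw [Matrix.mul_assoc], hD ((P * Dβᴴ) * Q) i i, Matrix.mul_apply, Finset.mul_sum]
    refine Finset.sum_congr rfl fun j _ => ?_
    rw [hDr P (e i) j]
    ring
  -- unitarity facts
  have hV1 : V * Vᴴ = 1 := mul_eq_one_comm.mp hV
  have hV'1 : V' * V'ᴴ = 1 := mul_eq_one_comm.mp hV'
  have hU1 : U * Uᴴ = 1 := mul_eq_one_comm.mp hU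
  have hU'1 : U' * U'ᴴ = 1 := mul_eq_one_comm.mp hU'
  have hPPh : P * Pᴴ = 1 := by
    rw [hP, conjTranspose_mul, conjTranspose_conjTranspose]
    calc Vᴴ * V' * (V'ᴴ * V) = Vᴴ * (V' * V'ᴴ) * V := by simp only [Matrix.mul_assoc]
      _ = 1 := by rw [hV'1, Matrix.mul_one, hV]
  have hPhP : Pᴴ * P = 1 := mul_eq_one_comm.mp hPPh
  have hQQh : Q * Qᴴ = 1 := by
    rw [hQ, conjTranspose_mul, conjTranspose_conjTranspose]
    calc U'ᴴ * U * (Uᴴ * U') = U'ᴴ * (U * Uᴴ) * U' := by simp only [Matrix.mul_assoc]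
      _ = 1 := by rw [hU1, Matrix.mul_one, hU']
  have hQhQ : Qᴴ * Q = 1 := mul_eq_one_comm.mp hQQh
  -- row and column norm sums
  have hnorm : ∀ {n : ℕ} (X : Matrix (Fin n) (Fin n) ℂ), X * Xᴴ = 1 →
      ∀ q, ∑ r, ‖X q r‖ ^ 2 = 1 := by
    intro n X hX q
    have h : (X * Xᴴ) q q = (1 : Matrix (Fin n) (Fin n) ℂ) q q := by rw [hX]
    rw [Matrix.mul_apply, Matrix.one_apply_eq] at h
    simp only [Matrix.conjTranspose_apply, RCLike.star_def, Complex.mul_conj] at h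
    have h' : ((∑ r, Complex.normSq (X q r) : ℝ) : ℂ) = ((1 : ℝ) : ℂ) := by
      push_cast
      exact h
    have h2 : ∑ r, Complex.normSq (X q r) = 1 := Complex.ofReal_injective h'
    simpa [Complex.sq_norm] using h2
  have hPnormRow : ∀ q, ∑ r, ‖P q r‖ ^ 2 = 1 := hnorm P hPPh
  have hPnormCol : ∀ r, ∑ q, ‖P q r‖ ^ 2 = 1 := by
    intro r
    have := hnorm Pᴴ (by rw [conjTranspose_conjTranspose]; exact hPhP) r
    simpa [Matrix.conjTranspose_apply] using this
  have hQnormRow : ∀ q, ∑ r, ‖Q q r‖ ^ 2 = 1 := hnorm Q hQQh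
  have hQnormCol : ∀ r, ∑ q, ‖Q q r‖ ^ 2 = 1 := by
    intro r
    have := hnorm Qᴴ (by rw [conjTranspose_conjTranspose]; exact hQhQ) r
    simpa [Matrix.conjTranspose_apply] using this
  -- partial sums over the embedding
  have hinj : Function.Injective e := by
    intro a b h
    exact Fin.ext (by simpa [he, Fin.ext_iff] using h)
  have hsub : ∀ (h : Fin N → ℝ), (∀ q, 0 ≤ h q) → ∑ j : Fin M, h (e j) ≤ ∑ q : Fin N, h q := by
    intro h h0
    rw [show ∑ j : Fin M, h (e j) = ∑ q ∈ Finset.univ.image e, h q from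
      (Finset.sum_image fun a _ b _ hh => hinj hh).symm]
    exact Finset.sum_le_sum_of_subset_of_nonneg (Finset.subset_univ _) fun q _ _ => h0 q
  -- apply the key lemma
  set cP : Fin M → Fin M → ℝ := fun i j => ‖P (e i) (e j)‖ with hcP
  set cQ : Fin M → Fin M → ℝ := fun i j => ‖Q j i‖ with hcQ
  have hProw : ∀ i, ∑ j, cP i j ^ 2 ≤ 1 := by
    intro i
    refine le_trans (hsub (fun q => ‖P (e i) q‖ ^ 2) fun q => sq_nonneg _) ?_
    rw [hPnormRow (e i)]
  have hPcol : ∀ j, ∑ i, cP i j ^ 2 ≤ 1 := by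
    intro j
    refine le_trans (hsub (fun q => ‖P q (e j)‖ ^ 2) fun q => sq_nonneg _) ?_
    rw [hPnormCol (e j)]
  have hQrow : ∀ i, ∑ j, cQ i j ^ 2 ≤ 1 := by
    intro i
    exact le_of_eq (hQnormCol i)
  have hQcol : ∀ j, ∑ i, cQ i j ^ 2 ≤ 1 := by
    intro j
    exact le_of_eq (hQnormRow j)
  have habs : ‖Matrix.trace (A * Bᴴ)‖
      ≤ ∑ i : Fin M, ∑ j : Fin M, α i * β j * (cP i j * cQ i j) := by
    rw [htr]
    refine le_trans (norm_sum_le _ _) (Finset.sum_le_sum fun i _ => ?_)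
    refine le_trans (norm_sum_le _ _) (Finset.sum_le_sum fun j _ => le_of_eq ?_)
    simp only [norm_mul, Complex.norm_real, Real.norm_eq_abs, abs_of_nonneg (hα0 i), abs_of_nonneg (hβ0 j),
      hcP, hcQ]
    try ring
  refine le_trans habs (keylem M α β cP cQ hα0 hβ0 hαm hβm
    (fun i j => norm_nonneg _) (fun i j => norm_nonneg _)
    hProw hPcol hQrow hQcol)

end
end
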